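/- arXiv:2105.04860 — 6 statements merged into one kernel-verified Lean document; each statement's English description precedes it below -/
import Mathlib

section
/- Let ρ' ∈ [1, ∞] and let φ : R^d → R be measurable with ‖φ‖_{L^{ρ'}} < ∞. For every c > 0 there exists a finite constant C depending only on ρ', d, c such that for all 0 ≤ s < u < t and x, y ∈ R^d: ∫_{R^d} g_c(u - s, z - x) |φ(z)| g_c(t - u, y - z) dz ≤ C ‖φ‖_{L^{ρ'}} (t - s)^{d/(2ρ')} (u - s)^{-d/(2ρ')} (t - u)^{-d/(2ρ')} g_c(t - s, y - x). -/
open MeasureTheory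
open scoped Real ENNReal RealInnerProductSpace

/-- `gauss d c u x` is the density at `x` of the centered Gaussian vector in `ℝ^d`
with covariance matrix `c u I_d`. -/
noncomputable def gauss (d : ℕ) (c u : ℝ) (x : EuclideanSpace ℝ (Fin d)) : ℝ :=
  (2 * Real.pi * c * u) ^ (-(d : ℝ) / 2) * Real.exp (-‖x‖ ^ 2 / (2 * c * u))

namespace GaussAux

variable {d : ℕ} {c : ℝ}

local notation "E" => EuclideanSpace ℝ (Fin d)

lemma gauss_pos (hc : 0 < c) {τ : ℝ} (hτ : 0 < τ) (x : E) : 0 < gauss d c τ x := by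
  unfold gauss; positivity

lemma gauss_continuous (τ : ℝ) : Continuous (gauss d c τ) := by
  unfold gauss; fun_prop

lemma gauss_rpow (hc : 0 < c) {τ : ℝ} (hτ : 0 < τ) {p : ℝ} (hp : 0 < p) (w : E) :
    gauss d c τ w ^ p
      = (2 * Real.pi * c * τ) ^ (-(d : ℝ) / 2 * p)
          * Real.exp (-(p / (2 * c * τ)) * ‖w‖ ^ 2) := by
  unfold gauss
  rw [Real.mul_rpow (by positivity) (Real.exp_nonneg _),
    ← Real.rpow_mul (by positivity : (0:ℝ) ≤ 2 * Real.pi * c * τ), ← Real.exp_mul]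
  congr 1
  field_simp

lemma integrable_exp_norm {b : ℝ} (hb : 0 < b) :
    Integrable (fun v : E => Real.exp (-b * ‖v‖ ^ 2)) := by
  have := (GaussianFourier.integrable_cexp_neg_mul_sq_norm_add (V := E)
    (b := (b : ℂ)) (by simpa using hb) 0 0).norm
  refine this.congr ?_
  filter_upwards with v
  simp [Complex.norm_exp, ← Complex.ofReal_pow]

lemma integrable_gauss_rpow (hc : 0 < c) {τ : ℝ} (hτ : 0 < τ) {p : ℝ} (hp : 0 < p) (m : E) :
    Integrable (fun z : E => gauss d c τ (z - m) ^ p) := by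
  have hb : 0 < p / (2 * c * τ) := by positivity
  have h := ((integrable_exp_norm (d := d) hb).comp_sub_right m).const_mul
    ((2 * Real.pi * c * τ) ^ (-(d : ℝ) / 2 * p))
  refine h.congr ?_
  filter_upwards with z
  rw [gauss_rpow hc hτ hp]

lemma integral_gauss_rpow (hc : 0 < c) {τ : ℝ} (hτ : 0 < τ) {p : ℝ} (hp : 0 < p) (m : E) :
    ∫ z : E, gauss d c τ (z - m) ^ p
      = (2 * Real.pi * c * τ) ^ (-(d : ℝ) / 2 * p)
          * (Real.pi / (p / (2 * c * τ))) ^ ((d : ℝ) / 2) := by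
  simp_rw [gauss_rpow hc hτ hp]
  rw [integral_const_mul,
    integral_sub_right_eq_self (fun z : E => Real.exp (-(p / (2 * c * τ)) * ‖z‖ ^ 2)) m,
    GaussianFourier.integral_rexp_neg_mul_sq_norm (by positivity)]
  norm_num [finrank_euclideanSpace_fin]

lemma integral_gauss_rpow' (hc : 0 < c) {τ : ℝ} (hτ : 0 < τ) {p : ℝ} (hp : 0 < p) (m : E) :
    ∫ z : E, gauss d c τ (z - m) ^ p
      = ((2 * Real.pi * c) ^ (-(d : ℝ) / 2 * p) * (Real.pi / (p / (2 * c))) ^ ((d : ℝ) / 2))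
          * τ ^ (-(d : ℝ) / 2 * (p - 1)) := by
  rw [integral_gauss_rpow hc hτ hp m]
  have h1 : (2 * Real.pi * c * τ) ^ (-(d : ℝ) / 2 * p)
      = (2 * Real.pi * c) ^ (-(d : ℝ) / 2 * p) * τ ^ (-(d : ℝ) / 2 * p) := by
    rw [← Real.mul_rpow (by positivity) hτ.le]
  have h2 : (Real.pi / (p / (2 * c * τ))) ^ ((d : ℝ) / 2)
      = (Real.pi / (p / (2 * c))) ^ ((d : ℝ) / 2) * τ ^ ((d : ℝ) / 2) := by
    rw [← Real.mul_rpow (by positivity) hτ.le]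
    congr 1
    field_simp
  rw [h1, h2, show -(d : ℝ) / 2 * (p - 1) = -(d : ℝ) / 2 * p + (d : ℝ) / 2 by ring,
    Real.rpow_add hτ]
  ring

lemma integral_gauss (hc : 0 < c) {τ : ℝ} (hτ : 0 < τ) (m : E) :
    ∫ z : E, gauss d c τ (z - m)
      = (2 * Real.pi * c) ^ (-(d : ℝ) / 2) * (Real.pi / (1 / (2 * c))) ^ ((d : ℝ) / 2) := by
  have h := integral_gauss_rpow' (d := d) hc hτ (p := 1) one_pos m
  simp only [Real.rpow_one, mul_one, sub_self, mul_zero, Real.rpow_zero] at h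
  simpa using h

lemma integral_le_toReal_lintegral {f : E → ℝ} (hf : ∀ z, 0 ≤ f z) :
    ∫ z, f z ≤ (∫⁻ z, ENNReal.ofReal (f z)).toReal := by
  by_cases hi : Integrable f volume
  · rw [integral_eq_lintegral_of_nonneg_ae (ae_of_all _ hf) hi.aestronglyMeasurable]
  · rw [integral_undef hi]; exact ENNReal.toReal_nonneg

/-- Key Hölder-type bound. -/
lemma key (hc : 0 < c) (ρ' : ℝ≥0∞) (hρ : 1 ≤ ρ') :
    ∃ C : ℝ, 0 ≤ C ∧ ∀ (φ : E → ℝ), Measurable φ → eLpNorm φ ρ' volume < ∞ →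
      ∀ τ : ℝ, 0 < τ → ∀ m : E,
        (∫ z : E, gauss d c τ (z - m) * |φ z|) ≤
          C * (eLpNorm φ ρ' volume).toReal * τ ^ (-(d : ℝ) / (2 * ρ'.toReal)) := by
  have step1 : ∀ (φ : E → ℝ) (τ : ℝ), 0 < τ → ∀ m : E,
      (∫ z : E, gauss d c τ (z - m) * |φ z|) ≤
        (∫⁻ z : E, ENNReal.ofReal (gauss d c τ (z - m)) * (‖φ z‖₊ : ℝ≥0∞)).toReal := by
    intro φ τ hτ m
    refine (integral_le_toReal_lintegral fun z =>
      mul_nonneg (gauss_pos hc hτ _).le (abs_nonneg _)).trans_eq ?_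
    congr 1
    refine lintegral_congr fun z => ?_
    exact (ENNReal.ofReal_mul (gauss_pos hc hτ _).le).trans (congrArg _ (Real.enorm_eq_ofReal_abs _).symm)
  by_cases htop : ρ' = ∞
  · subst htop
    refine ⟨(2 * Real.pi * c) ^ (-(d : ℝ) / 2) * (Real.pi / (1 / (2 * c))) ^ ((d : ℝ) / 2),
      by positivity, fun φ hφ hN τ hτ m => ?_⟩
    simp only [ENNReal.toReal_top, mul_zero, div_zero, Real.rpow_zero, mul_one]
    refine (step1 φ τ hτ m).trans ?_
    have hcont : Continuous (fun z : E => ENNReal.ofReal (gauss d c τ (z - m))) :=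
      ENNReal.continuous_ofReal.comp ((gauss_continuous τ).comp
        (continuous_id.sub continuous_const))
    have hmono : (∫⁻ z : E, ENNReal.ofReal (gauss d c τ (z - m)) * (‖φ z‖₊ : ℝ≥0∞))
        ≤ (∫⁻ z : E, ENNReal.ofReal (gauss d c τ (z - m))) * eLpNorm φ ⊤ volume := by
      rw [← lintegral_mul_const _ hcont.measurable]
      refine lintegral_mono_ae ?_
      filter_upwards [ae_le_eLpNormEssSup (f := φ) (μ := volume)] with z hz
      rw [eLpNorm_exponent_top]
      exact mul_le_mul_right hz _
    have hval : (∫⁻ z : E, ENNReal.ofReal (gauss d c τ (z - m)))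
        = ENNReal.ofReal ((2 * Real.pi * c) ^ (-(d : ℝ) / 2)
            * (Real.pi / (1 / (2 * c))) ^ ((d : ℝ) / 2)) := by
      rw [← integral_gauss hc hτ m,
        ← ofReal_integral_eq_lintegral_ofReal
          (by simpa [Real.rpow_one] using integrable_gauss_rpow (d := d) hc hτ one_pos m)
          (ae_of_all _ fun z => (gauss_pos hc hτ _).le)]
    calc (∫⁻ z : E, ENNReal.ofReal (gauss d c τ (z - m)) * (‖φ z‖₊ : ℝ≥0∞)).toReal
        ≤ ((∫⁻ z : E, ENNReal.ofReal (gauss d c τ (z - m))) * eLpNorm φ ⊤ volume).toReal := by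
          refine ENNReal.toReal_mono ?_ hmono
          rw [hval]
          exact ENNReal.mul_ne_top ENNReal.ofReal_ne_top hN.ne
      _ = (2 * Real.pi * c) ^ (-(d : ℝ) / 2) * (Real.pi / (1 / (2 * c))) ^ ((d : ℝ) / 2)
            * (eLpNorm φ ⊤ volume).toReal := by
          rw [hval, ENNReal.toReal_mul, ENNReal.toReal_ofReal (by positivity)]
  by_cases hone : ρ' = 1
  · subst hone
    refine ⟨(2 * Real.pi * c) ^ (-(d : ℝ) / 2), by positivity, fun φ hφ hN τ hτ m => ?_⟩
    have hptw : ∀ w : E, gauss d c τ w ≤ (2 * Real.pi * c * τ) ^ (-(d : ℝ) / 2) := by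
      intro w
      refine mul_le_of_le_one_right (by positivity) ?_
      calc Real.exp (-‖w‖ ^ 2 / (2 * c * τ)) ≤ Real.exp 0 := by
            refine Real.exp_le_exp.2 ?_
            rw [neg_div]
            exact neg_nonpos.2 (by positivity)
        _ = 1 := Real.exp_zero
    refine (step1 φ τ hτ m).trans ?_
    have hmono : (∫⁻ z : E, ENNReal.ofReal (gauss d c τ (z - m)) * (‖φ z‖₊ : ℝ≥0∞))
        ≤ ENNReal.ofReal ((2 * Real.pi * c * τ) ^ (-(d : ℝ) / 2)) * eLpNorm φ 1 volume := by
      rw [eLpNorm_one_eq_lintegral_enorm,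
        ← lintegral_const_mul _ hφ.enorm]
      exact lintegral_mono fun z =>
        mul_le_mul_left (ENNReal.ofReal_le_ofReal (hptw _)) _
    calc (∫⁻ z : E, ENNReal.ofReal (gauss d c τ (z - m)) * (‖φ z‖₊ : ℝ≥0∞)).toReal
        ≤ (ENNReal.ofReal ((2 * Real.pi * c * τ) ^ (-(d : ℝ) / 2))
            * eLpNorm φ 1 volume).toReal :=
          ENNReal.toReal_mono (ENNReal.mul_ne_top ENNReal.ofReal_ne_top hN.ne) hmono
      _ = (2 * Real.pi * c * τ) ^ (-(d : ℝ) / 2) * (eLpNorm φ 1 volume).toReal := by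
          rw [ENNReal.toReal_mul, ENNReal.toReal_ofReal (by positivity)]
      _ = (2 * Real.pi * c) ^ (-(d : ℝ) / 2) * (eLpNorm φ 1 volume).toReal
            * τ ^ (-(d : ℝ) / (2 * (1 : ℝ≥0∞).toReal)) := by
          rw [Real.mul_rpow (by positivity) hτ.le]
          norm_num
          ring
  -- main case : 1 < ρ' < ∞
  · have hρ1 : (1 : ℝ≥0∞) < ρ' := lt_of_le_of_ne hρ (Ne.symm hone)
    have hr : 1 < ρ'.toReal := by
      rw [← ENNReal.toReal_one]
      exact (ENNReal.toReal_lt_toReal (by simp) htop).mpr hρ1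
    set r := ρ'.toReal with hrdef
    have hpq : (Real.conjExponent r).HolderConjugate r :=
      (Real.HolderConjugate.conjExponent hr).symm
    set p := Real.conjExponent r with hpdef
    have hp : 0 < p := hpq.pos
    have hr0 : 0 < r := by linarith
    set X := (2 * Real.pi * c) ^ (-(d : ℝ) / 2 * p) * (Real.pi / (p / (2 * c))) ^ ((d : ℝ) / 2)
      with hXdef
    have hX : 0 < X := by rw [hXdef]; positivity
    refine ⟨X ^ (1 / p), by positivity, fun φ hφ hN τ hτ m => ?_⟩
    have hcont : Continuous (fun z : E => ENNReal.ofReal (gauss d c τ (z - m))) :=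
      ENNReal.continuous_ofReal.comp ((gauss_continuous τ).comp
        (continuous_id.sub continuous_const))
    have holder := ENNReal.lintegral_mul_le_Lp_mul_Lq volume hpq
      hcont.measurable.aemeasurable
      (hφ.nnnorm.coe_nnreal_ennreal.aemeasurable)
    simp only [Pi.mul_apply] at holder
    have hexp : (-(d : ℝ) / 2 * (p - 1)) * (1 / p) = -(d : ℝ) / (2 * r) := by
      have h1 : p⁻¹ + r⁻¹ = 1 := hpq.inv_add_inv_eq_one
      have h2 : (p - 1) / p = 1 / r := by
        rw [sub_div, div_self hp.ne', one_div, one_div]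
        linarith
      calc (-(d : ℝ) / 2 * (p - 1)) * (1 / p) = -(d : ℝ) / 2 * ((p - 1) / p) := by ring
        _ = -(d : ℝ) / 2 * (1 / r) := by rw [h2]
        _ = -(d : ℝ) / (2 * r) := by ring
    have hF : (∫⁻ z : E, ENNReal.ofReal (gauss d c τ (z - m)) ^ p) ^ (1 / p)
        = ENNReal.ofReal (X ^ (1 / p) * τ ^ (-(d : ℝ) / (2 * r))) := by
      have e1 : (∫⁻ z : E, ENNReal.ofReal (gauss d c τ (z - m)) ^ p)
          = ENNReal.ofReal (X * τ ^ (-(d : ℝ) / 2 * (p - 1))) := by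
        calc (∫⁻ z : E, ENNReal.ofReal (gauss d c τ (z - m)) ^ p)
            = ∫⁻ z : E, ENNReal.ofReal (gauss d c τ (z - m) ^ p) :=
              lintegral_congr fun z =>
                ENNReal.ofReal_rpow_of_nonneg (gauss_pos hc hτ _).le hp.le
          _ = ENNReal.ofReal (∫ z : E, gauss d c τ (z - m) ^ p) :=
              (ofReal_integral_eq_lintegral_ofReal (integrable_gauss_rpow hc hτ hp m)
                (ae_of_all _ fun z => Real.rpow_nonneg (gauss_pos hc hτ _).le p)).symm
          _ = ENNReal.ofReal (X * τ ^ (-(d : ℝ) / 2 * (p - 1))) := by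
              rw [integral_gauss_rpow' hc hτ hp m]
      rw [e1, ENNReal.ofReal_rpow_of_nonneg (by positivity) (by positivity)]
      congr 1
      rw [Real.mul_rpow hX.le (Real.rpow_nonneg hτ.le _), ← Real.rpow_mul hτ.le, hexp]
    have hG : (∫⁻ z : E, (‖φ z‖₊ : ℝ≥0∞) ^ r) ^ (1 / r) = eLpNorm φ ρ' volume :=
      (eLpNorm_eq_lintegral_rpow_enorm_toReal (μ := volume) (zero_lt_one.trans_le hρ).ne' htop
        (f := φ)).symm
    refine (step1 φ τ hτ m).trans ?_
    have hb : (∫⁻ z : E, ENNReal.ofReal (gauss d c τ (z - m)) * (‖φ z‖₊ : ℝ≥0∞))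
        ≤ ENNReal.ofReal (X ^ (1 / p) * τ ^ (-(d : ℝ) / (2 * r))) * eLpNorm φ ρ' volume := by
      rw [← hF, ← hG]
      exact holder
    calc (∫⁻ z : E, ENNReal.ofReal (gauss d c τ (z - m)) * (‖φ z‖₊ : ℝ≥0∞)).toReal
        ≤ (ENNReal.ofReal (X ^ (1 / p) * τ ^ (-(d : ℝ) / (2 * r)))
            * eLpNorm φ ρ' volume).toReal :=
          ENNReal.toReal_mono (ENNReal.mul_ne_top ENNReal.ofReal_ne_top hN.ne) hb
      _ = X ^ (1 / p) * (eLpNorm φ ρ' volume).toReal * τ ^ (-(d : ℝ) / (2 * r)) := by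
          rw [ENNReal.toReal_mul, ENNReal.toReal_ofReal (by positivity)]
          ring

lemma gauss_mul_gauss (hc : 0 < c) {a b : ℝ} (ha : 0 < a) (hb : 0 < b)
    (x y z : E) :
    gauss d c a (z - x) * gauss d c b (y - z)
      = gauss d c (a + b) (y - x)
          * gauss d c (a * b / (a + b)) (z - (x + (a / (a + b)) • (y - x))) := by
  have hab : 0 < a + b := by linarith
  have hcoef : (2 * Real.pi * c * a) ^ (-(d : ℝ) / 2) * (2 * Real.pi * c * b) ^ (-(d : ℝ) / 2)
      = (2 * Real.pi * c * (a + b)) ^ (-(d : ℝ) / 2)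
          * (2 * Real.pi * c * (a * b / (a + b))) ^ (-(d : ℝ) / 2) := by
    rw [← Real.mul_rpow (by positivity) (by positivity),
      ← Real.mul_rpow (by positivity) (by positivity)]
    congr 1
    field_simp
  have hsub : z - (x + (a / (a + b)) • (y - x)) = (z - x) - (a / (a + b)) • (y - x) := by
    rw [sub_add_eq_sub_sub]
  have hexp : -‖z - x‖ ^ 2 / (2 * c * a) + -‖y - z‖ ^ 2 / (2 * c * b)
      = -‖y - x‖ ^ 2 / (2 * c * (a + b))
        + -‖(z - x) - (a / (a + b)) • (y - x)‖ ^ 2 / (2 * c * (a * b / (a + b))) := by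
    have hyz : y - z = (y - x) - (z - x) := by abel
    rw [hyz]
    set w := z - x with hw
    set v := y - x with hv
    rw [norm_sub_sq_real v w, norm_sub_sq_real w ((a / (a + b)) • v),
      real_inner_smul_right, norm_smul, real_inner_comm v w]
    rw [Real.norm_eq_abs, abs_of_nonneg (by positivity : (0:ℝ) ≤ a / (a + b)), mul_pow]
    field_simp
    ring
  calc gauss d c a (z - x) * gauss d c b (y - z)
      = ((2 * Real.pi * c * a) ^ (-(d : ℝ) / 2) * (2 * Real.pi * c * b) ^ (-(d : ℝ) / 2))
          * Real.exp (-‖z - x‖ ^ 2 / (2 * c * a) + -‖y - z‖ ^ 2 / (2 * c * b)) := by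
        unfold gauss; rw [Real.exp_add]; ring
    _ = ((2 * Real.pi * c * (a + b)) ^ (-(d : ℝ) / 2)
          * (2 * Real.pi * c * (a * b / (a + b))) ^ (-(d : ℝ) / 2))
          * Real.exp (-‖y - x‖ ^ 2 / (2 * c * (a + b))
              + -‖(z - x) - (a / (a + b)) • (y - x)‖ ^ 2 / (2 * c * (a * b / (a + b)))) := by
        rw [hcoef, hexp]
    _ = gauss d c (a + b) (y - x)
          * gauss d c (a * b / (a + b)) (z - (x + (a / (a + b)) • (y - x))) := by
        unfold gauss; rw [hsub, Real.exp_add]; ring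

end GaussAux

theorem gauss_Lp_convolution_bound (d : ℕ) (c : ℝ) (hc : 0 < c) (ρ' : ℝ≥0∞) (hρ : 1 ≤ ρ') :
    ∃ C : ℝ, 0 ≤ C ∧
      ∀ (φ : EuclideanSpace ℝ (Fin d) → ℝ), Measurable φ → eLpNorm φ ρ' volume < ∞ →
        ∀ s u t : ℝ, 0 ≤ s → s < u → u < t →
          ∀ x y : EuclideanSpace ℝ (Fin d),
            (∫ z : EuclideanSpace ℝ (Fin d),
                gauss d c (u - s) (z - x) * |φ z| * gauss d c (t - u) (y - z)) ≤
              C * (eLpNorm φ ρ' volume).toReal *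
                (t - s) ^ ((d : ℝ) / (2 * ρ'.toReal)) *
                (u - s) ^ (-(d : ℝ) / (2 * ρ'.toReal)) *
                (t - u) ^ (-(d : ℝ) / (2 * ρ'.toReal)) *
                gauss d c (t - s) (y - x) := by
  obtain ⟨C, hC, hkey⟩ := GaussAux.key (d := d) hc ρ' hρ
  refine ⟨C, hC, ?_⟩
  intro φ hφ hN s u t hs hsu hut x y
  have ha : 0 < u - s := sub_pos.2 hsu
  have hb : 0 < t - u := sub_pos.2 hut
  have hab : 0 < (u - s) + (t - u) := by linarith
  have hts : t - s = (u - s) + (t - u) := by ring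
  have hτ : 0 < (u - s) * (t - u) / ((u - s) + (t - u)) :=
    div_pos (mul_pos ha hb) hab
  have hstep : (∫ z : EuclideanSpace ℝ (Fin d),
        gauss d c (u - s) (z - x) * |φ z| * gauss d c (t - u) (y - z))
      = gauss d c (t - s) (y - x) *
          ∫ z : EuclideanSpace ℝ (Fin d),
            gauss d c ((u - s) * (t - u) / ((u - s) + (t - u)))
              (z - (x + ((u - s) / ((u - s) + (t - u))) • (y - x))) * |φ z| := by
    rw [← integral_const_mul]
    refine integral_congr_ae (ae_of_all _ fun z => ?_)
    dsimp only
    rw [mul_right_comm, GaussAux.gauss_mul_gauss hc ha hb x y z, ← hts]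
    ring
  rw [hstep]
  have hI := hkey φ hφ hN _ hτ (x + ((u - s) / ((u - s) + (t - u))) • (y - x))
  have hsplit : ((u - s) * (t - u) / ((u - s) + (t - u))) ^ (-(d : ℝ) / (2 * ρ'.toReal))
      = (t - s) ^ ((d : ℝ) / (2 * ρ'.toReal)) * (u - s) ^ (-(d : ℝ) / (2 * ρ'.toReal))
          * (t - u) ^ (-(d : ℝ) / (2 * ρ'.toReal)) := by
    rw [hts]
    simp only [neg_div]
    rw [Real.rpow_neg hτ.le, Real.div_rpow (by positivity) hab.le,
      Real.mul_rpow ha.le hb.le, Real.rpow_neg ha.le, Real.rpow_neg hb.le,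
      inv_div, div_eq_mul_inv, mul_inv, ← mul_assoc]
  calc gauss d c (t - s) (y - x) *
        ∫ z : EuclideanSpace ℝ (Fin d),
          gauss d c ((u - s) * (t - u) / ((u - s) + (t - u)))
            (z - (x + ((u - s) / ((u - s) + (t - u))) • (y - x))) * |φ z|
      ≤ gauss d c (t - s) (y - x) *
          (C * (eLpNorm φ ρ' volume).toReal *
            ((u - s) * (t - u) / ((u - s) + (t - u))) ^ (-(d : ℝ) / (2 * ρ'.toReal))) :=
        mul_le_mul_of_nonneg_left hI (GaussAux.gauss_pos hc (by linarith) _).le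
    _ = C * (eLpNorm φ ρ' volume).toReal *
          (t - s) ^ ((d : ℝ) / (2 * ρ'.toReal)) *
          (u - s) ^ (-(d : ℝ) / (2 * ρ'.toReal)) *
          (t - u) ^ (-(d : ℝ) / (2 * ρ'.toReal)) *
          gauss d c (t - s) (y - x) := by
        rw [hsplit]
        ring
end

section
/- Gaussian temporal Hölder estimate: for each c > 1 and each multi-index ζ with |ζ| ≤ 2, there exists a finite constant C such that for all 0 < u ≤ u' ≤ T and x ∈ R^d: |∇_x^ζ g_1(u', x) − ∇_x^ζ g_1(u, x)| ≤ C ((u' − u) ∧ u) u^{-1-|ζ|/2} (g_c(u, x) + g_c(u', x)). -/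
open scoped Real

/-- The spatial derivative `∇^ζ g_1(u,·)(x)` of order `k = |ζ|`, encoded by the map
`idx : Fin k → Fin d` listing the coordinate directions of differentiation. -/
noncomputable def gaussDeriv (d : ℕ) (k : ℕ) (idx : Fin k → Fin d) (u : ℝ)
    (x : EuclideanSpace ℝ (Fin d)) : ℝ :=
  iteratedFDeriv ℝ k (gauss d 1 u) x fun m => EuclideanSpace.single (idx m) 1

lemma my_pow_mul_exp_le (c : ℝ) (hc : 1 < c) (n : ℕ) :
    ∃ K, 0 ≤ K ∧ ∀ r : ℝ, 0 ≤ r →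
      r ^ n * Real.exp (-(r / 2)) ≤ K * Real.exp (-(r / (2 * c))) := by
  set ε : ℝ := 1 / 2 - 1 / (2 * c) with hε
  have hc0 : (0:ℝ) < c := by linarith
  have hεpos : 0 < ε := by
    rw [hε]
    have : 1 / (2 * c) < 1 / 2 := by
      apply one_div_lt_one_div_of_lt <;> linarith
    linarith
  refine ⟨(n.factorial : ℝ) / ε ^ n, by positivity, fun r hr => ?_⟩
  have h1 : (ε * r) ^ n / (n.factorial : ℝ) ≤ Real.exp (ε * r) := by
    calc (ε * r) ^ n / (n.factorial : ℝ)
        ≤ ∑ i ∈ Finset.range (n + 1), (ε * r) ^ i / (i.factorial : ℝ) := by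
          exact Finset.single_le_sum (f := fun i => (ε * r) ^ i / (i.factorial : ℝ))
            (fun i _ => by positivity) (Finset.self_mem_range_succ n)
      _ ≤ Real.exp (ε * r) := Real.sum_le_exp_of_nonneg (by positivity) _
  have h2 : r ^ n ≤ (n.factorial : ℝ) / ε ^ n * Real.exp (ε * r) := by
    rw [mul_pow, div_le_iff₀ (by positivity)] at h1
    rw [div_mul_eq_mul_div, le_div_iff₀ (by positivity)]
    nlinarith [h1]
  have h3 : Real.exp (-(r / 2)) = Real.exp (-(r / (2 * c))) * Real.exp (-(ε * r)) := by
    rw [← Real.exp_add]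
    congr 1
    field_simp [hε]
    rw [hε]; field_simp; ring
  rw [h3, ← mul_assoc]
  have h4 : r ^ n * Real.exp (-(ε * r)) ≤ (n.factorial : ℝ) / ε ^ n := by
    rw [Real.exp_neg]
    rw [mul_inv_le_iff₀ (Real.exp_pos _)]
    exact h2
  calc r ^ n * Real.exp (-(r / (2 * c))) * Real.exp (-(ε * r))
      = r ^ n * Real.exp (-(ε * r)) * Real.exp (-(r / (2 * c))) := by ring
    _ ≤ (n.factorial : ℝ) / ε ^ n * Real.exp (-(r / (2 * c))) := by
        apply mul_le_mul_of_nonneg_right h4 (Real.exp_pos _).le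

lemma gauss_pos {d : ℕ} {c u : ℝ} (hc : 0 < c) (hu : 0 < u) (x : EuclideanSpace ℝ (Fin d)) :
    0 < gauss d c u x := by
  unfold gauss
  have h : (0:ℝ) < 2 * Real.pi * c * u := by positivity
  positivity

lemma poly_gauss_le (d : ℕ) {c : ℝ} (hc : 1 < c) (n : ℕ) :
    ∃ K, 0 ≤ K ∧ ∀ u : ℝ, 0 < u → ∀ x : EuclideanSpace ℝ (Fin d),
      (‖x‖ ^ 2 / u) ^ n * gauss d 1 u x ≤ K * gauss d c u x := by
  obtain ⟨K0, hK0, hK⟩ := my_pow_mul_exp_le c hc n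
  have hc0 : (0:ℝ) < c := by linarith
  refine ⟨K0 * c ^ ((d:ℝ)/2), by positivity, fun u hu x => ?_⟩
  have hx : (0:ℝ) ≤ ‖x‖ ^ 2 / u := by positivity
  have h2pi : (0:ℝ) < 2 * Real.pi * u := by positivity
  have hprefac : (2 * Real.pi * c * u) ^ (-(d:ℝ)/2)
      = (2 * Real.pi * 1 * u) ^ (-(d:ℝ)/2) * c ^ (-(d:ℝ)/2) := by
    rw [show 2 * Real.pi * c * u = (2 * Real.pi * 1 * u) * c by ring,
      Real.mul_rpow (by positivity) hc0.le]
  have hexp1 : -‖x‖ ^ 2 / (2 * 1 * u) = -(‖x‖ ^ 2 / u / 2) := by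
    field_simp
  have hexpc : -‖x‖ ^ 2 / (2 * c * u) = -(‖x‖ ^ 2 / u / (2 * c)) := by
    rw [neg_div, div_div, mul_comm u (2 * c)]
  unfold gauss
  rw [hprefac, hexp1, hexpc]
  have key := hK (‖x‖ ^ 2 / u) hx
  have hcc : c ^ ((d:ℝ)/2) * c ^ (-(d:ℝ)/2) = 1 := by
    rw [← Real.rpow_add hc0, show (d:ℝ)/2 + -(d:ℝ)/2 = 0 by ring, Real.rpow_zero]
  calc (‖x‖ ^ 2 / u) ^ n * ((2 * Real.pi * 1 * u) ^ (-(d:ℝ)/2) * Real.exp (-(‖x‖ ^ 2 / u / 2)))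
      = (2 * Real.pi * 1 * u) ^ (-(d:ℝ)/2) * ((‖x‖ ^ 2 / u) ^ n * Real.exp (-(‖x‖ ^ 2 / u / 2))) := by
        ring
    _ ≤ (2 * Real.pi * 1 * u) ^ (-(d:ℝ)/2) * (K0 * Real.exp (-(‖x‖ ^ 2 / u / (2 * c)))) := by
        apply mul_le_mul_of_nonneg_left key
        positivity
    _ = K0 * c ^ ((d:ℝ)/2) * ((2 * Real.pi * 1 * u) ^ (-(d:ℝ)/2) * c ^ (-(d:ℝ)/2)
          * Real.exp (-(‖x‖ ^ 2 / u / (2 * c)))) := by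
        rw [show K0 * c ^ ((d:ℝ)/2) * ((2 * Real.pi * 1 * u) ^ (-(d:ℝ)/2) * c ^ (-(d:ℝ)/2)
          * Real.exp (-(‖x‖ ^ 2 / u / (2 * c)))) = (c ^ ((d:ℝ)/2) * c ^ (-(d:ℝ)/2)) *
            (K0 * ((2 * Real.pi * 1 * u) ^ (-(d:ℝ)/2) * Real.exp (-(‖x‖ ^ 2 / u / (2 * c))))) by ring,
          hcc]
        ring

lemma gauss_le_twoPow {d : ℕ} {c : ℝ} (hc : 0 < c) {s u' : ℝ} (hs : 0 < s) (h1 : s ≤ u')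
    (h2 : u' ≤ 2 * s) (x : EuclideanSpace ℝ (Fin d)) :
    gauss d c s x ≤ 2 ^ ((d:ℝ)/2) * gauss d c u' x := by
  have hu' : 0 < u' := lt_of_lt_of_le hs h1
  have hexp : Real.exp (-‖x‖ ^ 2 / (2 * c * s)) ≤ Real.exp (-‖x‖ ^ 2 / (2 * c * u')) := by
    apply Real.exp_le_exp.mpr
    rw [neg_div, neg_div, neg_le_neg_iff]
    apply div_le_div_of_nonneg_left (by positivity) (by positivity)
    nlinarith
  have hpre : (2 * Real.pi * c * s) ^ (-(d:ℝ)/2)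
      ≤ 2 ^ ((d:ℝ)/2) * (2 * Real.pi * c * u') ^ (-(d:ℝ)/2) := by
    have hb : 2 * Real.pi * c * u' / 2 ≤ 2 * Real.pi * c * s := by
      have hpc : (0:ℝ) ≤ Real.pi * c := by positivity
      have := mul_le_mul_of_nonneg_left h2 hpc
      nlinarith
    calc (2 * Real.pi * c * s) ^ (-(d:ℝ)/2)
        ≤ (2 * Real.pi * c * u' / 2) ^ (-(d:ℝ)/2) := by
          apply Real.rpow_le_rpow_of_nonpos (by positivity) hb
          have : (0:ℝ) ≤ (d:ℝ) := Nat.cast_nonneg d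
          linarith
      _ = 2 ^ ((d:ℝ)/2) * (2 * Real.pi * c * u') ^ (-(d:ℝ)/2) := by
          rw [div_eq_mul_inv, Real.mul_rpow (by positivity) (by positivity),
            ← Real.rpow_neg_one 2, ← Real.rpow_mul (by norm_num : (0:ℝ) ≤ 2)]
          rw [mul_comm]
          congr 1
          ring
  unfold gauss
  rw [← mul_assoc]
  exact mul_le_mul hpre hexp (Real.exp_pos _).le (by positivity)

lemma gauss_hasFDerivAt (d : ℕ) {u : ℝ} (hu : 0 < u) (x : EuclideanSpace ℝ (Fin d)) :
    HasFDerivAt (gauss d 1 u) ((-(gauss d 1 u x) / u) • (innerSL ℝ x)) x := by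
  have hnorm : HasFDerivAt (fun y : EuclideanSpace ℝ (Fin d) => ‖y‖ ^ 2)
      (2 • (innerSL ℝ x)) x := (hasStrictFDerivAt_norm_sq x).hasFDerivAt
  have h1 : HasFDerivAt (fun y : EuclideanSpace ℝ (Fin d) =>
      (-(1 / (2 * u))) * ‖y‖ ^ 2) ((-(1 / (2 * u))) • (2 • (innerSL ℝ x))) x :=
    hnorm.const_mul _
  have h2 := h1.exp
  have h3 := h2.const_mul ((2 * Real.pi * 1 * u) ^ (-(d : ℝ) / 2))
  have heq : (fun y : EuclideanSpace ℝ (Fin d) => (2 * Real.pi * 1 * u) ^ (-(d : ℝ) / 2) *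
      Real.exp ((-(1 / (2 * u))) * ‖y‖ ^ 2)) = gauss d 1 u := by
    funext y
    unfold gauss
    congr 1
    congr 1
    field_simp
  rw [heq] at h3
  refine h3.congr_fderiv ?_
  symm
  have hg : gauss d 1 u x = (2 * Real.pi * 1 * u) ^ (-(d : ℝ) / 2) *
      Real.exp ((-(1 / (2 * u))) * ‖x‖ ^ 2) := by rw [← heq]
  rw [hg]
  ext v
  simp only [ContinuousLinearMap.smul_apply, smul_eq_mul, ContinuousLinearMap.smul_apply]
  push_cast
  field_simp
  ring

lemma gauss_fderiv (d : ℕ) {u : ℝ} (hu : 0 < u) :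
    fderiv ℝ (gauss d 1 u) = fun x => (-(gauss d 1 u x) / u) • (innerSL ℝ x) :=
  funext fun x => (gauss_hasFDerivAt d hu x).fderiv

lemma gauss_contDiff (d : ℕ) (u : ℝ) : ContDiff ℝ 2 (gauss d 1 u) := by
  have : gauss d 1 u = fun x : EuclideanSpace ℝ (Fin d) =>
      (2 * Real.pi * 1 * u) ^ (-(d : ℝ) / 2) * Real.exp (-‖x‖ ^ 2 / (2 * 1 * u)) := rfl
  rw [this]
  exact contDiff_const.mul (((contDiff_norm_sq (𝕜 := ℝ)).neg.div_const _).exp)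

lemma gaussDeriv_zero (d : ℕ) (idx : Fin 0 → Fin d) (u : ℝ) (x : EuclideanSpace ℝ (Fin d)) :
    gaussDeriv d 0 idx u x = gauss d 1 u x := by
  simp [gaussDeriv]

lemma gaussDeriv_one (d : ℕ) (idx : Fin 1 → Fin d) {u : ℝ} (hu : 0 < u)
    (x : EuclideanSpace ℝ (Fin d)) :
    gaussDeriv d 1 idx u x = -(gauss d 1 u x) / u * x (idx 0) := by
  rw [gaussDeriv, iteratedFDeriv_one_apply, (gauss_hasFDerivAt d hu x).fderiv]
  simp [real_inner_smul_left, EuclideanSpace.inner_single_right]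

lemma gaussDeriv_two (d : ℕ) (idx : Fin 2 → Fin d) {u : ℝ} (hu : 0 < u)
    (x : EuclideanSpace ℝ (Fin d)) :
    gaussDeriv d 2 idx u x = gauss d 1 u x / u ^ 2 * (x (idx 0) * x (idx 1)) -
      gauss d 1 u x / u * (if idx 0 = idx 1 then 1 else 0) := by
  have hcd := gauss_contDiff d u
  set v0 : EuclideanSpace ℝ (Fin d) := EuclideanSpace.single (idx 0) (1:ℝ) with hv0
  set v1 : EuclideanSpace ℝ (Fin d) := EuclideanSpace.single (idx 1) (1:ℝ) with hv1
  have hdc : DifferentiableAt ℝ (fderiv ℝ (gauss d 1 u)) x := by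
    have h1 : ContDiff ℝ 1 (fderiv ℝ (gauss d 1 u)) := by
      have := hcd.fderiv_right (m := 1) (by norm_num)
      exact this
    exact (h1.differentiable (by norm_num)).differentiableAt
  have happ : gaussDeriv d 2 idx u x = fderiv ℝ (fun y => fderiv ℝ (gauss d 1 u) y v1) x v0 := by
    rw [gaussDeriv, iteratedFDeriv_two_apply, fderiv_clm_apply hdc (differentiableAt_const v1)]
    simp
    rfl
  rw [happ]
  have heq : (fun y => fderiv ℝ (gauss d 1 u) y v1)
      = fun y : EuclideanSpace ℝ (Fin d) => (-(gauss d 1 u y) / u) * (inner ℝ v1 y : ℝ) := by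
    funext y
    rw [gauss_fderiv d hu]
    simp only [ContinuousLinearMap.smul_apply, innerSL_apply_apply, smul_eq_mul]
    rw [real_inner_comm]
  rw [heq]
  have hs : HasFDerivAt (fun y : EuclideanSpace ℝ (Fin d) => -(gauss d 1 u y) / u)
      ((gauss d 1 u x / u ^ 2) • (innerSL ℝ x)) x := by
    have h1 := (gauss_hasFDerivAt d hu x).const_mul (-(1 / u))
    have heq2 : (fun y : EuclideanSpace ℝ (Fin d) => (-(1/u)) * gauss d 1 u y)
        = fun y => -(gauss d 1 u y) / u := by funext y; ring
    rw [heq2] at h1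
    refine h1.congr_fderiv ?_
    symm
    rw [smul_smul]
    congr 1
    field_simp
  have hi : HasFDerivAt (fun y : EuclideanSpace ℝ (Fin d) => (inner ℝ v1 y : ℝ))
      (innerSL ℝ v1) x := (innerSL ℝ v1).hasFDerivAt
  have hprod := hs.mul' hi
  simp only [Pi.mul_def] at hprod
  rw [hprod.fderiv]
  simp only [ContinuousLinearMap.add_apply, ContinuousLinearMap.smul_apply,
    ContinuousLinearMap.smul_apply, innerSL_apply_apply, smul_eq_mul]
  have e1 : (inner ℝ x v0 : ℝ) = x (idx 0) := by
    rw [hv0, EuclideanSpace.inner_single_right]; simp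
  have e2 : (inner ℝ v1 x : ℝ) = x (idx 1) := by
    rw [hv1, EuclideanSpace.inner_single_left]; simp
  have e3 : (inner ℝ v1 v0 : ℝ) = (if idx 0 = idx 1 then 1 else 0) := by
    rw [hv1, EuclideanSpace.inner_single_left]
    simp [hv0, EuclideanSpace.single_apply, eq_comm]
  rw [e1, e2, e3]
  rw [op_smul_eq_mul]
  ring

lemma gauss_hasDerivAt_time (d : ℕ) {s : ℝ} (hs : 0 < s) (x : EuclideanSpace ℝ (Fin d)) :
    HasDerivAt (fun t => gauss d 1 t x)
      ((-(d : ℝ) / (2 * s) + ‖x‖ ^ 2 / (2 * s ^ 2)) * gauss d 1 s x) s := by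
  have hpi := Real.pi_pos
  have h2s : (0:ℝ) < 2 * Real.pi * 1 * s := by positivity
  -- prefactor
  have hlin : HasDerivAt (fun t : ℝ => 2 * Real.pi * 1 * t) (2 * Real.pi * 1) s := by
    simpa using (hasDerivAt_id s).const_mul (2 * Real.pi * 1)
  have hf1 : HasDerivAt (fun t : ℝ => (2 * Real.pi * 1 * t) ^ (-(d : ℝ) / 2))
      ((-(d : ℝ) / 2) * (2 * Real.pi * 1 * s) ^ (-(d : ℝ) / 2 - 1) * (2 * Real.pi * 1)) s := by
    have := hlin.rpow_const (p := -(d : ℝ) / 2) (Or.inl h2s.ne')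
    convert this using 1
    ring
  -- exponential factor
  have hinv : HasDerivAt (fun t : ℝ => -‖x‖ ^ 2 / (2 * 1 * t)) (‖x‖ ^ 2 / (2 * s ^ 2)) s := by
    have h := (hasDerivAt_inv hs.ne').const_mul (-‖x‖ ^ 2 / 2)
    have hfn : (fun y : ℝ => -‖x‖ ^ 2 / 2 * y⁻¹) = fun t : ℝ => -‖x‖ ^ 2 / (2 * 1 * t) := by
      funext t; ring
    rw [hfn] at h
    refine h.congr_deriv ?_
    ring
  have hf2 : HasDerivAt (fun t : ℝ => Real.exp (-‖x‖ ^ 2 / (2 * 1 * t)))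
      (Real.exp (-‖x‖ ^ 2 / (2 * 1 * s)) * (‖x‖ ^ 2 / (2 * s ^ 2))) s := by
    exact hinv.exp
  have hmul := hf1.mul hf2
  have hfun : (fun t => gauss d 1 t x) =
      fun t => (2 * Real.pi * 1 * t) ^ (-(d : ℝ) / 2) * Real.exp (-‖x‖ ^ 2 / (2 * 1 * t)) := rfl
  rw [hfun]
  refine hmul.congr_deriv ?_
  symm
  have hsub : (2 * Real.pi * 1 * s) ^ (-(d : ℝ) / 2 - 1)
      = (2 * Real.pi * 1 * s) ^ (-(d : ℝ) / 2) / (2 * Real.pi * 1 * s) := by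
    rw [Real.rpow_sub h2s, Real.rpow_one]
  rw [hsub]
  unfold gauss
  field_simp

lemma assemble {d : ℕ} {c : ℝ} (hc : 0 < c) (k : ℕ) (x : EuclideanSpace ℝ (Fin d))
    (h h' : ℝ → ℝ) {Cb Cd : ℝ} (hCb : 0 ≤ Cb) (hCd : 0 ≤ Cd)
    (hder : ∀ s, 0 < s → HasDerivAt h (h' s) s)
    (hb : ∀ s, 0 < s → |h s| * s ^ ((k:ℝ)/2) ≤ Cb * gauss d c s x)
    (hb' : ∀ s, 0 < s → |h' s| * s ^ (1 + (k:ℝ)/2) ≤ Cd * gauss d c s x)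
    {u u' : ℝ} (hu : 0 < u) (huu : u ≤ u') :
    |h u' - h u| ≤ (2 ^ ((d:ℝ)/2) * (Cb + Cd)) * (min (u' - u) u) *
      u ^ (-(1:ℝ) - (k:ℝ)/2) * (gauss d c u x + gauss d c u' x) := by
  have hu' : 0 < u' := lt_of_lt_of_le hu huu
  have hgU : 0 < gauss d c u x := gauss_pos hc hu x
  have hgU' : 0 < gauss d c u' x := gauss_pos hc hu' x
  have htwo : (1:ℝ) ≤ 2 ^ ((d:ℝ)/2) := Real.one_le_rpow (by norm_num) (by positivity)
  have hexp : u ^ (-(1:ℝ) - (k:ℝ)/2) = u ^ (-(1 + (k:ℝ)/2)) := by ring_nf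
  have hupos : (0:ℝ) < u ^ (-(1:ℝ) - (k:ℝ)/2) := Real.rpow_pos_of_pos hu _
  by_cases hcase : u' ≤ 2 * u
  · -- MVT case
    have hmin : min (u' - u) u = u' - u := min_eq_left (by linarith)
    set M := 2 ^ ((d:ℝ)/2) * Cd * u ^ (-(1:ℝ) - (k:ℝ)/2) * gauss d c u' x with hM
    have hbound : ∀ s ∈ Set.Icc u u', |h' s| ≤ M := by
      intro s hsmem
      obtain ⟨hs1, hs2⟩ := hsmem
      have hs : 0 < s := lt_of_lt_of_le hu hs1
      have hkey := hb' s hs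
      have hspow : 0 < s ^ (1 + (k:ℝ)/2) := Real.rpow_pos_of_pos hs _
      have h1 : |h' s| ≤ Cd * gauss d c s x * s ^ (-(1 + (k:ℝ)/2)) := by
        rw [Real.rpow_neg hs.le]
        rw [← le_div_iff₀ hspow, div_eq_mul_inv] at hkey
        exact hkey
      have h2 : s ^ (-(1 + (k:ℝ)/2)) ≤ u ^ (-(1 + (k:ℝ)/2)) := by
        apply Real.rpow_le_rpow_of_nonpos hu hs1
        have : (0:ℝ) ≤ (k:ℝ) := Nat.cast_nonneg k
        linarith
      have h3 : gauss d c s x ≤ 2 ^ ((d:ℝ)/2) * gauss d c u' x :=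
        gauss_le_twoPow hc hs hs2 (by linarith) x
      calc |h' s| ≤ Cd * gauss d c s x * s ^ (-(1 + (k:ℝ)/2)) := h1
        _ ≤ Cd * (2 ^ ((d:ℝ)/2) * gauss d c u' x) * u ^ (-(1 + (k:ℝ)/2)) := by
            apply mul_le_mul
            · exact mul_le_mul_of_nonneg_left h3 hCd
            · exact h2
            · positivity
            · positivity
        _ = M := by rw [hM, hexp]; ring
    have hMnn : 0 ≤ M := by
      rw [hM]; positivity
    have hmvt : |h u' - h u| ≤ M * |u' - u| := by
      have := Convex.norm_image_sub_le_of_norm_hasDerivWithin_le (f := h) (f' := h') (C := M)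
        (s := Set.Icc u u')
        (fun s hs => ((hder s (lt_of_lt_of_le hu hs.1)).hasDerivWithinAt))
        (fun s hs => by simpa using hbound s hs) (convex_Icc u u')
        (Set.left_mem_Icc.mpr huu) (Set.right_mem_Icc.mpr huu)
      simpa [Real.norm_eq_abs] using this
    rw [hmin]
    calc |h u' - h u| ≤ M * |u' - u| := hmvt
      _ = 2 ^ ((d:ℝ)/2) * Cd * u ^ (-(1:ℝ) - (k:ℝ)/2) * gauss d c u' x * (u' - u) := by
          rw [hM, abs_of_nonneg (by linarith : (0:ℝ) ≤ u' - u)]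
      _ ≤ (2 ^ ((d:ℝ)/2) * (Cb + Cd)) * (u' - u) * u ^ (-(1:ℝ) - (k:ℝ)/2) *
            (gauss d c u x + gauss d c u' x) := by
          have e1 : (0:ℝ) ≤ u' - u := by linarith
          have e2 : gauss d c u' x ≤ gauss d c u x + gauss d c u' x := by linarith
          have e3 : 2 ^ ((d:ℝ)/2) * Cd ≤ 2 ^ ((d:ℝ)/2) * (Cb + Cd) := by nlinarith
          calc 2 ^ ((d:ℝ)/2) * Cd * u ^ (-(1:ℝ) - (k:ℝ)/2) * gauss d c u' x * (u' - u)
              ≤ 2 ^ ((d:ℝ)/2) * (Cb + Cd) * u ^ (-(1:ℝ) - (k:ℝ)/2) *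
                (gauss d c u x + gauss d c u' x) * (u' - u) := by
                apply mul_le_mul_of_nonneg_right _ e1
                apply mul_le_mul
                · exact mul_le_mul_of_nonneg_right e3 hupos.le
                · exact e2
                · positivity
                · positivity
            _ = 2 ^ ((d:ℝ)/2) * (Cb + Cd) * (u' - u) * u ^ (-(1:ℝ) - (k:ℝ)/2) *
                (gauss d c u x + gauss d c u' x) := by ring
  · -- separate bounds case
    push_neg at hcase
    have hmin : min (u' - u) u = u := min_eq_right (by linarith)
    rw [hmin]
    have hpow : u * u ^ (-(1:ℝ) - (k:ℝ)/2) = u ^ (-(k:ℝ)/2) := by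
      calc u * u ^ (-(1:ℝ) - (k:ℝ)/2) = u ^ (1:ℝ) * u ^ (-(1:ℝ) - (k:ℝ)/2) := by
            rw [Real.rpow_one]
        _ = u ^ ((1:ℝ) + (-(1:ℝ) - (k:ℝ)/2)) := (Real.rpow_add hu _ _).symm
        _ = u ^ (-(k:ℝ)/2) := by congr 1; ring
    have hknn : -((k:ℝ)/2) ≤ 0 := by
      have : (0:ℝ) ≤ (k:ℝ) := Nat.cast_nonneg k
      linarith
    have b1 : |h u| ≤ Cb * gauss d c u x * u ^ (-(k:ℝ)/2) := by
      have hkey := hb u hu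
      have hupk : (0:ℝ) < u ^ ((k:ℝ)/2) := Real.rpow_pos_of_pos hu _
      rw [← le_div_iff₀ hupk, div_eq_mul_inv, ← Real.rpow_neg hu.le, ← neg_div] at hkey
      exact hkey
    have b2 : |h u'| ≤ Cb * gauss d c u' x * u ^ (-(k:ℝ)/2) := by
      have hkey := hb u' hu'
      have hupk : (0:ℝ) < u' ^ ((k:ℝ)/2) := Real.rpow_pos_of_pos hu' _
      rw [← le_div_iff₀ hupk, div_eq_mul_inv, ← Real.rpow_neg hu'.le, ← neg_div] at hkey
      calc |h u'| ≤ Cb * gauss d c u' x * u' ^ (-(k:ℝ)/2) := hkey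
        _ ≤ Cb * gauss d c u' x * u ^ (-(k:ℝ)/2) := by
            apply mul_le_mul_of_nonneg_left _ (by positivity)
            exact Real.rpow_le_rpow_of_nonpos hu huu (neg_div 2 (k:ℝ) ▸ hknn)
    have hCle : Cb ≤ 2 ^ ((d:ℝ)/2) * (Cb + Cd) := by nlinarith
    calc |h u' - h u| ≤ |h u'| + |h u| := abs_sub _ _
      _ ≤ Cb * gauss d c u' x * u ^ (-(k:ℝ)/2) + Cb * gauss d c u x * u ^ (-(k:ℝ)/2) := by
          linarith
      _ = Cb * (gauss d c u x + gauss d c u' x) * (u * u ^ (-(1:ℝ) - (k:ℝ)/2)) := by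
          rw [hpow]; ring
      _ ≤ (2 ^ ((d:ℝ)/2) * (Cb + Cd)) * (gauss d c u x + gauss d c u' x) *
            (u * u ^ (-(1:ℝ) - (k:ℝ)/2)) := by
          apply mul_le_mul_of_nonneg_right _ (by positivity)
          apply mul_le_mul_of_nonneg_right hCle (by positivity)
      _ = 2 ^ ((d:ℝ)/2) * (Cb + Cd) * u * u ^ (-(1:ℝ) - (k:ℝ)/2) *
            (gauss d c u x + gauss d c u' x) := by ring

lemma coord_le {d : ℕ} (x : EuclideanSpace ℝ (Fin d)) (i : Fin d) : |x i| ≤ ‖x‖ := by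
  have h1 : (x i) ^ 2 ≤ ‖x‖ ^ 2 := by
    rw [EuclideanSpace.norm_eq, Real.sq_sqrt (by positivity)]
    calc (x i) ^ 2 = ‖x i‖ ^ 2 := by rw [Real.norm_eq_abs, sq_abs]
      _ ≤ ∑ j, ‖x j‖ ^ 2 :=
        Finset.single_le_sum (f := fun j => ‖x j‖ ^ 2) (fun j _ => by positivity)
          (Finset.mem_univ i)
  calc |x i| = Real.sqrt ((x i) ^ 2) := (Real.sqrt_sq_eq_abs _).symm
    _ ≤ Real.sqrt (‖x‖ ^ 2) := Real.sqrt_le_sqrt h1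
    _ = ‖x‖ := Real.sqrt_sq (norm_nonneg x)


lemma bound1b (d : ℕ) (c : ℝ) (K0 K1 CC : ℝ) {s : ℝ} (hs : 0 < s)
    (x : EuclideanSpace ℝ (Fin d)) (y : ℝ) (hyN : |y| ≤ ‖x‖)
    (hG0 : 0 ≤ gauss d 1 s x) (hgc : 0 ≤ gauss d c s x)
    (A0 : gauss d 1 s x ≤ K0 * gauss d c s x)
    (A1 : ‖x‖ ^ 2 / s * gauss d 1 s x ≤ K1 * gauss d c s x)
    (hconst : (K1 + K0) / 2 ≤ CC) :
    |-(gauss d 1 s x) / s * y| * Real.sqrt s ≤ CC * gauss d c s x := by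
  have hS : 0 < Real.sqrt s := Real.sqrt_pos.mpr hs
  have hS2 : Real.sqrt s ^ 2 = s := Real.sq_sqrt hs.le
  have habs : |-(gauss d 1 s x) / s * y| = gauss d 1 s x / s * |y| := by
    rw [abs_mul, abs_div, abs_neg, abs_of_nonneg hG0, abs_of_pos hs]
  rw [habs]
  have hNS : ‖x‖ * Real.sqrt s ≤ (‖x‖ ^ 2 + s) / 2 := by
    nlinarith [sq_nonneg (‖x‖ - Real.sqrt s), hS2]
  have step : gauss d 1 s x / s * |y| * Real.sqrt s
      ≤ ((‖x‖ ^ 2 / s * gauss d 1 s x) + gauss d 1 s x) / 2 := by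
    have h1 : gauss d 1 s x / s * |y| * Real.sqrt s
        ≤ gauss d 1 s x / s * (‖x‖ * Real.sqrt s) := by
      rw [mul_assoc]
      apply mul_le_mul_of_nonneg_left _ (div_nonneg hG0 hs.le)
      exact mul_le_mul_of_nonneg_right hyN hS.le
    have h2 : gauss d 1 s x / s * (‖x‖ * Real.sqrt s)
        ≤ gauss d 1 s x / s * ((‖x‖ ^ 2 + s) / 2) :=
      mul_le_mul_of_nonneg_left hNS (div_nonneg hG0 hs.le)
    have h3 : gauss d 1 s x / s * ((‖x‖ ^ 2 + s) / 2)
        = ((‖x‖ ^ 2 / s * gauss d 1 s x) + gauss d 1 s x) / 2 := by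
      field_simp
    linarith
  have hCg := mul_le_mul_of_nonneg_right hconst hgc
  linarith [A0, A1, step, hCg]

lemma bound1d (d : ℕ) (c : ℝ) (K0 K1 K2 CC : ℝ) {s : ℝ} (hs : 0 < s)
    (x : EuclideanSpace ℝ (Fin d)) (y : ℝ) (hyN : |y| ≤ ‖x‖)
    (hG0 : 0 ≤ gauss d 1 s x) (hgc : 0 ≤ gauss d c s x)
    (hGabs : |(-(d : ℝ) / (2 * s) + ‖x‖ ^ 2 / (2 * s ^ 2)) * gauss d 1 s x| ≤
        ((d : ℝ) / (2 * s) + ‖x‖ ^ 2 / (2 * s ^ 2)) * gauss d 1 s x)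
    (A0 : gauss d 1 s x ≤ K0 * gauss d c s x)
    (A1 : ‖x‖ ^ 2 / s * gauss d 1 s x ≤ K1 * gauss d c s x)
    (A2 : ‖x‖ ^ 4 / s ^ 2 * gauss d 1 s x ≤ K2 * gauss d c s x)
    (hconst : (1 + (d:ℝ)/2)/2 * K1 + (1 + (d:ℝ)/2)/2 * K0 + (1/4) * K2 + (1/4) * K1 ≤ CC) :
    |y * ((s ^ 2)⁻¹ * gauss d 1 s x + (-s⁻¹) *
        ((-(d : ℝ) / (2 * s) + ‖x‖ ^ 2 / (2 * s ^ 2)) * gauss d 1 s x))| * (s * Real.sqrt s)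
      ≤ CC * gauss d c s x := by
  set G := gauss d 1 s x with hG
  set N := ‖x‖ with hN
  have hN0 : (0:ℝ) ≤ N := norm_nonneg x
  have hd0 : (0:ℝ) ≤ (d:ℝ) := Nat.cast_nonneg d
  have hS : 0 < Real.sqrt s := Real.sqrt_pos.mpr hs
  have hS2 : Real.sqrt s ^ 2 = s := Real.sq_sqrt hs.le
  have hNS : N * Real.sqrt s ≤ (N ^ 2 + s) / 2 := by
    nlinarith [sq_nonneg (N - Real.sqrt s), hS2]
  have habs : |y * ((s ^ 2)⁻¹ * G + (-s⁻¹) *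
      ((-(d : ℝ) / (2 * s) + N ^ 2 / (2 * s ^ 2)) * G))|
      ≤ N * ((s ^ 2)⁻¹ * G + s⁻¹ * (((d:ℝ)/(2*s) + N ^ 2/(2*s^2)) * G)) := by
    rw [abs_mul]
    apply mul_le_mul hyN _ (abs_nonneg _) hN0
    calc |(s ^ 2)⁻¹ * G + (-s⁻¹) * ((-(d : ℝ) / (2 * s) + N ^ 2 / (2 * s ^ 2)) * G)|
        ≤ |(s ^ 2)⁻¹ * G| + |(-s⁻¹) * ((-(d : ℝ) / (2 * s) + N ^ 2 / (2 * s ^ 2)) * G)| :=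
          abs_add_le _ _
      _ ≤ (s ^ 2)⁻¹ * G + s⁻¹ * (((d:ℝ)/(2*s) + N ^ 2/(2*s^2)) * G) := by
          have e1 : |(s ^ 2)⁻¹ * G| = (s ^ 2)⁻¹ * G := by
            rw [abs_mul, abs_of_nonneg (by positivity : (0:ℝ) ≤ (s^2)⁻¹), abs_of_nonneg hG0]
          have e2 : |(-s⁻¹) * ((-(d : ℝ) / (2 * s) + N ^ 2 / (2 * s ^ 2)) * G)|
              ≤ s⁻¹ * (((d:ℝ)/(2*s) + N ^ 2/(2*s^2)) * G) := by
            rw [abs_mul, abs_neg, abs_of_nonneg (by positivity : (0:ℝ) ≤ s⁻¹)]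
            exact mul_le_mul_of_nonneg_left hGabs (by positivity : (0:ℝ) ≤ s⁻¹)
          linarith
  have step1 := mul_le_mul_of_nonneg_right habs
    (by positivity : (0:ℝ) ≤ s * Real.sqrt s)
  have step2 : (N * ((s ^ 2)⁻¹ * G + s⁻¹ * (((d:ℝ)/(2*s) + N ^ 2/(2*s^2)) * G))) *
      (s * Real.sqrt s)
      = (1 + (d:ℝ)/2) * ((N * Real.sqrt s)/s) * G
        + (1/2) * (N ^ 2 * (N * Real.sqrt s) / s ^ 2) * G := by
    field_simp
    ring
  have step3 : (1 + (d:ℝ)/2) * ((N * Real.sqrt s)/s) * G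
        + (1/2) * (N ^ 2 * (N * Real.sqrt s) / s ^ 2) * G
      ≤ (1 + (d:ℝ)/2) * (((N ^ 2 + s)/2)/s) * G
        + (1/2) * (N ^ 2 * ((N ^ 2 + s)/2) / s ^ 2) * G := by
    apply add_le_add
    · apply mul_le_mul_of_nonneg_right _ hG0
      apply mul_le_mul_of_nonneg_left _ (by positivity)
      exact (div_le_div_iff_of_pos_right hs).mpr hNS
    · apply mul_le_mul_of_nonneg_right _ hG0
      apply mul_le_mul_of_nonneg_left _ (by norm_num)
      apply (div_le_div_iff_of_pos_right (by positivity : (0:ℝ) < s ^ 2)).mpr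
      exact mul_le_mul_of_nonneg_left hNS (by positivity)
  have step4 : (1 + (d:ℝ)/2) * (((N ^ 2 + s)/2)/s) * G
        + (1/2) * (N ^ 2 * ((N ^ 2 + s)/2) / s ^ 2) * G
      = ((1 + (d:ℝ)/2)/2) * (N ^ 2/s * G) + ((1 + (d:ℝ)/2)/2) * G
        + (1/4) * (N ^ 4/s ^ 2 * G) + (1/4) * (N ^ 2/s * G) := by
    field_simp
    ring
  have B0 := mul_le_mul_of_nonneg_left A0 (by positivity : (0:ℝ) ≤ (1+(d:ℝ)/2)/2)
  have B1 := mul_le_mul_of_nonneg_left A1 (by positivity : (0:ℝ) ≤ (1+(d:ℝ)/2)/2)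
  have hCg := mul_le_mul_of_nonneg_right hconst hgc
  linarith [A1, A2, step1, step2, step3, step4, B0, B1, hCg]

lemma bound2b (d : ℕ) (c : ℝ) (K0 K1 CC : ℝ) {s : ℝ} (hs : 0 < s)
    (x : EuclideanSpace ℝ (Fin d)) (y z δ : ℝ) (hyN : |y| ≤ ‖x‖) (hzN : |z| ≤ ‖x‖)
    (hδ0 : 0 ≤ δ) (hδ1 : δ ≤ 1)
    (hG0 : 0 ≤ gauss d 1 s x) (hgc : 0 ≤ gauss d c s x)
    (A0 : gauss d 1 s x ≤ K0 * gauss d c s x)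
    (A1 : ‖x‖ ^ 2 / s * gauss d 1 s x ≤ K1 * gauss d c s x)
    (hconst : K1 + K0 ≤ CC) :
    |gauss d 1 s x / s ^ 2 * (y * z) - gauss d 1 s x / s * δ| * s ≤ CC * gauss d c s x := by
  set G := gauss d 1 s x with hG
  set N := ‖x‖ with hN
  have hN0 : (0:ℝ) ≤ N := norm_nonneg x
  have habs : |G / s ^ 2 * (y * z) - G / s * δ| ≤ G / s ^ 2 * N ^ 2 + G / s := by
    calc |G / s ^ 2 * (y * z) - G / s * δ|
        ≤ |G / s ^ 2 * (y * z)| + |G / s * δ| := abs_sub _ _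
      _ ≤ G / s ^ 2 * N ^ 2 + G / s := by
          apply add_le_add
          · rw [abs_mul, abs_of_nonneg (div_nonneg hG0 (by positivity))]
            apply mul_le_mul_of_nonneg_left _ (div_nonneg hG0 (by positivity))
            rw [abs_mul]
            calc |y| * |z| ≤ N * N := mul_le_mul hyN hzN (abs_nonneg z) hN0
              _ = N ^ 2 := (sq N).symm
          · rw [abs_mul, abs_of_nonneg (div_nonneg hG0 hs.le), abs_of_nonneg hδ0]
            calc G / s * δ ≤ G / s * 1 :=
                  mul_le_mul_of_nonneg_left hδ1 (div_nonneg hG0 hs.le)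
              _ = G / s := mul_one _
  have step1 := mul_le_mul_of_nonneg_right habs hs.le
  have step2 : (G / s ^ 2 * N ^ 2 + G / s) * s = N ^ 2 / s * G + G := by
    field_simp
  have hCg := mul_le_mul_of_nonneg_right hconst hgc
  linarith [A0, A1, step1, step2, hCg]

lemma bound2d (d : ℕ) (c : ℝ) (K0 K1 K2 CC : ℝ) {s : ℝ} (hs : 0 < s)
    (x : EuclideanSpace ℝ (Fin d)) (y z δ : ℝ) (hyN : |y| ≤ ‖x‖) (hzN : |z| ≤ ‖x‖)
    (hδ0 : 0 ≤ δ) (hδ1 : δ ≤ 1)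
    (hG0 : 0 ≤ gauss d 1 s x) (hgc : 0 ≤ gauss d c s x)
    (hGabs : |(-(d : ℝ) / (2 * s) + ‖x‖ ^ 2 / (2 * s ^ 2)) * gauss d 1 s x| ≤
        ((d : ℝ) / (2 * s) + ‖x‖ ^ 2 / (2 * s ^ 2)) * gauss d 1 s x)
    (A0 : gauss d 1 s x ≤ K0 * gauss d c s x)
    (A1 : ‖x‖ ^ 2 / s * gauss d 1 s x ≤ K1 * gauss d c s x)
    (A2 : ‖x‖ ^ 4 / s ^ 2 * gauss d 1 s x ≤ K2 * gauss d c s x)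
    (hconst : (d:ℝ)/2 * K1 + 1/2 * K2 + 2 * K1 + (d:ℝ)/2 * K0 + 1/2 * K1 + K0 ≤ CC) :
    |(((-(d : ℝ) / (2 * s) + ‖x‖ ^ 2 / (2 * s ^ 2)) * gauss d 1 s x) * (s ^ 2)⁻¹ +
        gauss d 1 s x * (-(2 * s ^ 1) / (s ^ 2) ^ 2)) * (y * z) -
      (((-(d : ℝ) / (2 * s) + ‖x‖ ^ 2 / (2 * s ^ 2)) * gauss d 1 s x) * s⁻¹ +
        gauss d 1 s x * (-(s ^ 2)⁻¹)) * δ| * s ^ 2 ≤ CC * gauss d c s x := by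
  set G := gauss d 1 s x with hG
  set N := ‖x‖ with hN
  set Gd := (-(d : ℝ) / (2 * s) + N ^ 2 / (2 * s ^ 2)) * G with hGd
  set B := ((d : ℝ) / (2 * s) + N ^ 2 / (2 * s ^ 2)) * G with hB
  have hN0 : (0:ℝ) ≤ N := norm_nonneg x
  have hd0 : (0:ℝ) ≤ (d:ℝ) := Nat.cast_nonneg d
  have hB0 : 0 ≤ B := le_trans (abs_nonneg Gd) hGabs
  have habs : |(Gd * (s ^ 2)⁻¹ + G * (-(2 * s ^ 1) / (s ^ 2) ^ 2)) * (y * z) -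
      (Gd * s⁻¹ + G * (-(s ^ 2)⁻¹)) * δ|
      ≤ (B * (s ^ 2)⁻¹ + G * (2 * s / (s ^ 2) ^ 2)) * N ^ 2 +
        (B * s⁻¹ + G * (s ^ 2)⁻¹) := by
    calc |(Gd * (s ^ 2)⁻¹ + G * (-(2 * s ^ 1) / (s ^ 2) ^ 2)) * (y * z) -
        (Gd * s⁻¹ + G * (-(s ^ 2)⁻¹)) * δ|
        ≤ |(Gd * (s ^ 2)⁻¹ + G * (-(2 * s ^ 1) / (s ^ 2) ^ 2)) * (y * z)| +
          |(Gd * s⁻¹ + G * (-(s ^ 2)⁻¹)) * δ| := abs_sub _ _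
      _ ≤ (B * (s ^ 2)⁻¹ + G * (2 * s / (s ^ 2) ^ 2)) * N ^ 2 +
          (B * s⁻¹ + G * (s ^ 2)⁻¹) := by
          apply add_le_add
          · rw [abs_mul]
            apply mul_le_mul
            · calc |Gd * (s ^ 2)⁻¹ + G * (-(2 * s ^ 1) / (s ^ 2) ^ 2)|
                  ≤ |Gd * (s ^ 2)⁻¹| + |G * (-(2 * s ^ 1) / (s ^ 2) ^ 2)| := abs_add_le _ _
                _ ≤ B * (s ^ 2)⁻¹ + G * (2 * s / (s ^ 2) ^ 2) := by
                    apply add_le_add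
                    · rw [abs_mul, abs_of_nonneg (by positivity : (0:ℝ) ≤ (s^2)⁻¹)]
                      exact mul_le_mul_of_nonneg_right hGabs (by positivity)
                    · rw [abs_mul, abs_of_nonneg hG0, abs_div, abs_neg,
                        abs_of_nonneg (by positivity : (0:ℝ) ≤ 2 * s ^ 1),
                        abs_of_nonneg (by positivity : (0:ℝ) ≤ (s ^ 2) ^ 2)]
                      apply mul_le_mul_of_nonneg_left _ hG0
                      rw [pow_one]
            · rw [abs_mul]
              calc |y| * |z| ≤ N * N := mul_le_mul hyN hzN (abs_nonneg z) hN0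
                _ = N ^ 2 := (sq N).symm
            · exact abs_nonneg _
            · positivity
          · rw [abs_mul, abs_of_nonneg hδ0]
            calc |Gd * s⁻¹ + G * (-(s ^ 2)⁻¹)| * δ
                ≤ |Gd * s⁻¹ + G * (-(s ^ 2)⁻¹)| * 1 :=
                  mul_le_mul_of_nonneg_left hδ1 (abs_nonneg _)
              _ = |Gd * s⁻¹ + G * (-(s ^ 2)⁻¹)| := mul_one _
              _ ≤ |Gd * s⁻¹| + |G * (-(s ^ 2)⁻¹)| := abs_add_le _ _
              _ ≤ B * s⁻¹ + G * (s ^ 2)⁻¹ := by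
                  apply add_le_add
                  · rw [abs_mul, abs_of_nonneg (by positivity : (0:ℝ) ≤ s⁻¹)]
                    exact mul_le_mul_of_nonneg_right hGabs (by positivity)
                  · rw [abs_mul, abs_neg, abs_of_nonneg hG0,
                      abs_of_nonneg (by positivity : (0:ℝ) ≤ (s^2)⁻¹)]
  have step1 := mul_le_mul_of_nonneg_right habs (by positivity : (0:ℝ) ≤ s ^ 2)
  have step2 : ((B * (s ^ 2)⁻¹ + G * (2 * s / (s ^ 2) ^ 2)) * N ^ 2 +
      (B * s⁻¹ + G * (s ^ 2)⁻¹)) * s ^ 2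
      = (d:ℝ)/2 * (N ^ 2 / s * G) + 1/2 * (N ^ 4 / s ^ 2 * G) + 2 * (N ^ 2 / s * G) +
        (d:ℝ)/2 * G + 1/2 * (N ^ 2 / s * G) + G := by
    rw [hB]
    field_simp
    ring
  have Bd0 := mul_le_mul_of_nonneg_left A0 (by positivity : (0:ℝ) ≤ (d:ℝ)/2)
  have Bd1 := mul_le_mul_of_nonneg_left A1 (by positivity : (0:ℝ) ≤ (d:ℝ)/2)
  have hCg := mul_le_mul_of_nonneg_right hconst hgc
  linarith [A0, A1, A2, Bd0, Bd1, step1, step2, hCg]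

theorem gauss_deriv_time_holder (d : ℕ) (T c : ℝ) (hT : 0 < T) (hc : 1 < c)
    (k : ℕ) (hk : k ≤ 2) :
    ∃ C : ℝ, 0 ≤ C ∧
      ∀ (idx : Fin k → Fin d) (u u' : ℝ) (x : EuclideanSpace ℝ (Fin d)),
        0 < u → u ≤ u' → u' ≤ T →
        |gaussDeriv d k idx u' x - gaussDeriv d k idx u x| ≤
          C * (min (u' - u) u) * u ^ (-(1 : ℝ) - (k : ℝ) / 2) *
            (gauss d c u x + gauss d c u' x) := by
  have hc0 : (0:ℝ) < c := by linarith
  obtain ⟨K0, hK0, hKf0⟩ := poly_gauss_le d hc 0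
  obtain ⟨K1, hK1, hKf1⟩ := poly_gauss_le d hc 1
  obtain ⟨K2, hK2, hKf2⟩ := poly_gauss_le d hc 2
  have hd0 : (0:ℝ) ≤ (d:ℝ) := Nat.cast_nonneg d
  set CC : ℝ := ((d:ℝ) + 4) * (K0 + K1 + K2 + 1) with hCC
  have hCC0 : 0 ≤ CC := by positivity
  refine ⟨2 ^ ((d:ℝ)/2) * (CC + CC), by positivity, ?_⟩
  intro idx u u' x hu huu' hu'T
  -- basic facts for bounds, for arbitrary s > 0
  have hGpos : ∀ s : ℝ, 0 < s → 0 < gauss d 1 s x := fun s hs => gauss_pos one_pos hs x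
  have hgcnn : ∀ s : ℝ, 0 < s → 0 ≤ gauss d c s x := fun s hs => (gauss_pos hc0 hs x).le
  have A0 : ∀ s : ℝ, 0 < s → gauss d 1 s x ≤ K0 * gauss d c s x := by
    intro s hs
    have := hKf0 s hs x
    simpa using this
  have A1 : ∀ s : ℝ, 0 < s → ‖x‖ ^ 2 / s * gauss d 1 s x ≤ K1 * gauss d c s x := by
    intro s hs
    have := hKf1 s hs x
    simpa using this
  have A2 : ∀ s : ℝ, 0 < s → ‖x‖ ^ 4 / s ^ 2 * gauss d 1 s x ≤ K2 * gauss d c s x := by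
    intro s hs
    have h := hKf2 s hs x
    have he : (‖x‖ ^ 2 / s) ^ 2 = ‖x‖ ^ 4 / s ^ 2 := by
      rw [div_pow]; ring_nf
    rwa [he] at h
  have hGabs : ∀ s : ℝ, 0 < s →
      |(-(d : ℝ) / (2 * s) + ‖x‖ ^ 2 / (2 * s ^ 2)) * gauss d 1 s x| ≤
        ((d:ℝ)/(2*s) + ‖x‖^2/(2*s^2)) * gauss d 1 s x := by
    intro s hs
    rw [abs_mul, abs_of_nonneg (hGpos s hs).le]
    apply mul_le_mul_of_nonneg_right _ (hGpos s hs).le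
    calc |(-(d : ℝ) / (2 * s) + ‖x‖ ^ 2 / (2 * s ^ 2))|
        ≤ |(-(d : ℝ) / (2 * s))| + |‖x‖ ^ 2 / (2 * s ^ 2)| := abs_add_le _ _
      _ = (d:ℝ)/(2*s) + ‖x‖^2/(2*s^2) := by
          rw [abs_div, abs_div, abs_neg, abs_of_nonneg hd0,
            abs_of_nonneg (by positivity : (0:ℝ) ≤ 2*s),
            abs_of_nonneg (by positivity : (0:ℝ) ≤ ‖x‖^2),
            abs_of_nonneg (by positivity : (0:ℝ) ≤ 2*s^2)]
  interval_cases k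
  · -- k = 0
    have key := assemble hc0 0 x (fun s => gauss d 1 s x)
      (fun s => (-(d : ℝ) / (2 * s) + ‖x‖ ^ 2 / (2 * s ^ 2)) * gauss d 1 s x)
      hCC0 hCC0
      (fun s hs => gauss_hasDerivAt_time d hs x)
      (fun s hs => by
        rw [show ((0:ℕ):ℝ)/2 = (0:ℝ) by norm_num, Real.rpow_zero, mul_one,
          abs_of_nonneg (hGpos s hs).le]
        calc gauss d 1 s x ≤ K0 * gauss d c s x := A0 s hs
          _ ≤ CC * gauss d c s x := by
              apply mul_le_mul_of_nonneg_right _ (hgcnn s hs)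
              rw [hCC]
              nlinarith [mul_nonneg hd0 hK0, mul_nonneg hd0 hK1, mul_nonneg hd0 hK2])
      (fun s hs => by
        rw [show (1 + ((0:ℕ):ℝ)/2) = (1:ℝ) by norm_num, Real.rpow_one]
        have step : |(-(d : ℝ) / (2 * s) + ‖x‖ ^ 2 / (2 * s ^ 2)) * gauss d 1 s x| * s
            ≤ ((d:ℝ)/2) * gauss d 1 s x + (‖x‖^2/s * gauss d 1 s x) / 2 := by
          calc |(-(d : ℝ) / (2 * s) + ‖x‖ ^ 2 / (2 * s ^ 2)) * gauss d 1 s x| * s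
              ≤ (((d:ℝ)/(2*s) + ‖x‖^2/(2*s^2)) * gauss d 1 s x) * s :=
                mul_le_mul_of_nonneg_right (hGabs s hs) hs.le
            _ = ((d:ℝ)/2) * gauss d 1 s x + (‖x‖^2/s * gauss d 1 s x) / 2 := by
                field_simp
        have B0 := mul_le_mul_of_nonneg_left (A0 s hs) (by positivity : (0:ℝ) ≤ (d:ℝ)/2)
        have hconst : (d:ℝ)/2 * K0 + K1/2 ≤ CC := by
          rw [hCC]
          nlinarith [mul_nonneg hd0 hK0, mul_nonneg hd0 hK1, mul_nonneg hd0 hK2]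
        have hCg := mul_le_mul_of_nonneg_right hconst (hgcnn s hs)
        linarith [A1 s hs, step, B0, hCg])
      hu huu'
    rw [gaussDeriv_zero, gaussDeriv_zero]
    exact key
  · -- k = 1
    set y : ℝ := x (idx 0) with hy
    have hyN : |y| ≤ ‖x‖ := coord_le x (idx 0)
    have hder : ∀ s : ℝ, 0 < s → HasDerivAt (fun t => -(gauss d 1 t x)/t * y)
        (y * ((s^2)⁻¹ * gauss d 1 s x + (-s⁻¹) *
          ((-(d : ℝ) / (2 * s) + ‖x‖ ^ 2 / (2 * s ^ 2)) * gauss d 1 s x))) s := by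
      intro s hs
      have hG := gauss_hasDerivAt_time d hs x
      have hinv : HasDerivAt (fun t : ℝ => -t⁻¹) ((s^2)⁻¹) s := by
        have := (hasDerivAt_inv hs.ne').neg
        refine this.congr_deriv ?_
        ring
      have hprod := hinv.mul hG
      have hcm := hprod.const_mul y
      have hfn : (fun t => y * (-t⁻¹ * gauss d 1 t x)) = fun t => -(gauss d 1 t x)/t * y := by
        funext t; ring
      simp only [Pi.mul_apply] at hcm
      rw [hfn] at hcm
      convert hcm using 1
    have key := assemble hc0 1 x (fun s => -(gauss d 1 s x)/s * y)
      (fun s => y * ((s^2)⁻¹ * gauss d 1 s x + (-s⁻¹) *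
        ((-(d : ℝ) / (2 * s) + ‖x‖ ^ 2 / (2 * s ^ 2)) * gauss d 1 s x)))
      hCC0 hCC0 hder
      (fun s hs => by
        rw [show (((1:ℕ)):ℝ)/2 = 1/(2:ℝ) by norm_num, ← Real.sqrt_eq_rpow]
        exact bound1b d c K0 K1 CC hs x y hyN (hGpos s hs).le (hgcnn s hs)
          (A0 s hs) (A1 s hs)
          (by rw [hCC]; nlinarith [mul_nonneg hd0 hK0, mul_nonneg hd0 hK1,
            mul_nonneg hd0 hK2]))
      (fun s hs => by
        have h32 : s ^ (1 + ((1:ℕ):ℝ)/2) = s * Real.sqrt s := by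
          rw [show (1 + ((1:ℕ):ℝ)/2) = 1 + 1/(2:ℝ) by norm_num, Real.rpow_add hs,
            Real.rpow_one, ← Real.sqrt_eq_rpow]
        rw [h32]
        exact bound1d d c K0 K1 K2 CC hs x y hyN (hGpos s hs).le (hgcnn s hs)
          (hGabs s hs) (A0 s hs) (A1 s hs) (A2 s hs)
          (by rw [hCC]; nlinarith [mul_nonneg hd0 hK0, mul_nonneg hd0 hK1,
            mul_nonneg hd0 hK2]))
      hu huu'
    rw [gaussDeriv_one d idx hu, gaussDeriv_one d idx (lt_of_lt_of_le hu huu')]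
    exact key
  · -- k = 2
    set y : ℝ := x (idx 0) with hy
    set z : ℝ := x (idx 1) with hz
    set δ : ℝ := if idx 0 = idx 1 then (1:ℝ) else 0 with hδ
    have hyN : |y| ≤ ‖x‖ := coord_le x (idx 0)
    have hzN : |z| ≤ ‖x‖ := coord_le x (idx 1)
    have hδ01 : 0 ≤ δ ∧ δ ≤ 1 := by
      constructor <;> · rw [hδ]; split <;> norm_num
    have hder : ∀ s : ℝ, 0 < s → HasDerivAt
        (fun t => gauss d 1 t x / t^2 * (y*z) - gauss d 1 t x / t * δ)
        ((((-(d : ℝ) / (2 * s) + ‖x‖ ^ 2 / (2 * s ^ 2)) * gauss d 1 s x) * (s^2)⁻¹ +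
            gauss d 1 s x * (-(2 * s^1) / (s^2)^2)) * (y*z) -
          (((-(d : ℝ) / (2 * s) + ‖x‖ ^ 2 / (2 * s ^ 2)) * gauss d 1 s x) * s⁻¹ +
            gauss d 1 s x * (-(s^2)⁻¹)) * δ) s := by
      intro s hs
      have hG := gauss_hasDerivAt_time d hs x
      have hpow2 : HasDerivAt (fun t : ℝ => (t^2)⁻¹) (-(2 * s^1) / (s^2)^2) s :=
        (hasDerivAt_pow 2 s).inv (pow_ne_zero 2 hs.ne')
      have hinv : HasDerivAt (fun t : ℝ => t⁻¹) (-(s^2)⁻¹) s := hasDerivAt_inv hs.ne'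
      have h1 := (hG.mul hpow2).mul_const (y*z)
      have h2 := (hG.mul hinv).mul_const δ
      have h12 := h1.sub h2
      have hfn : (fun t => gauss d 1 t x * (t^2)⁻¹ * (y*z) - gauss d 1 t x * t⁻¹ * δ)
          = fun t => gauss d 1 t x / t^2 * (y*z) - gauss d 1 t x / t * δ := by
        funext t; ring
      simp only [Pi.sub_def, Pi.mul_apply] at h12
      rw [hfn] at h12
      convert h12 using 1
    have key := assemble hc0 2 x
      (fun s => gauss d 1 s x / s^2 * (y*z) - gauss d 1 s x / s * δ)
      (fun s => (((-(d : ℝ) / (2 * s) + ‖x‖ ^ 2 / (2 * s ^ 2)) * gauss d 1 s x) * (s^2)⁻¹ +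
            gauss d 1 s x * (-(2 * s^1) / (s^2)^2)) * (y*z) -
          (((-(d : ℝ) / (2 * s) + ‖x‖ ^ 2 / (2 * s ^ 2)) * gauss d 1 s x) * s⁻¹ +
            gauss d 1 s x * (-(s^2)⁻¹)) * δ)
      hCC0 hCC0 hder
      (fun s hs => by
        rw [show (((2:ℕ)):ℝ)/2 = (1:ℝ) by norm_num, Real.rpow_one]
        exact bound2b d c K0 K1 CC hs x y z δ hyN hzN hδ01.1 hδ01.2
          (hGpos s hs).le (hgcnn s hs) (A0 s hs) (A1 s hs)
          (by rw [hCC]; nlinarith [mul_nonneg hd0 hK0, mul_nonneg hd0 hK1,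
            mul_nonneg hd0 hK2]))
      (fun s hs => by
        have h2e : s ^ (1 + ((2:ℕ):ℝ)/2) = s^2 := by
          rw [show (1 + ((2:ℕ):ℝ)/2) = ((2:ℕ):ℝ) by norm_num, Real.rpow_natCast]
        rw [h2e]
        exact bound2d d c K0 K1 K2 CC hs x y z δ hyN hzN hδ01.1 hδ01.2
          (hGpos s hs).le (hgcnn s hs) (hGabs s hs) (A0 s hs) (A1 s hs) (A2 s hs)
          (by rw [hCC]; nlinarith [mul_nonneg hd0 hK0, mul_nonneg hd0 hK1,
            mul_nonneg hd0 hK2]))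
      hu huu'
    rw [gaussDeriv_two d idx hu, gaussDeriv_two d idx (lt_of_lt_of_le hu huu')]
    have heq : ∀ v : ℝ, 0 < v → gauss d 1 v x / v ^ 2 * (x (idx 0) * x (idx 1)) -
        gauss d 1 v x / v * (if idx 0 = idx 1 then (1:ℝ) else 0)
        = gauss d 1 v x / v^2 * (y*z) - gauss d 1 v x / v * δ := by
      intro v hv; rw [hy, hz, hδ]
    rw [heq u hu, heq u' (lt_of_lt_of_le hu huu')]
    exact key
end

section
/- Gronwall–Volterra lemma with one singularity: let β̃ < 1, β > β̃ − 1 and η, δ, T > 0. There exists a finite constant C depending only on β, β̃, η, δ, T such that any measurable bounded function f : [0,T] → R_+ satisfying f(t) ≤ η + δ t^β ∫_0^t f(s) s^{-β̃} ds for all t ∈ [0,T] obeys sup_{t∈[0,T]} f(t) ≤ C. -/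
open MeasureTheory intervalIntegral

private def gronAux (η K : ℝ) : ℕ → ℝ
  | 0 => 2 * η
  | n + 1 => gronAux η K n + 2 * (η + K * gronAux η K n)

private lemma gronAux_nonneg {η K : ℝ} (hη : 0 ≤ η) (hK : 0 ≤ K) :
    ∀ n, 0 ≤ gronAux η K n := by
  intro n
  induction n with
  | zero => simp [gronAux]; linarith
  | succ n ih => simp [gronAux]; nlinarith

private lemma gronAux_mono {η K : ℝ} (hη : 0 ≤ η) (hK : 0 ≤ K) (n : ℕ) :
    gronAux η K n ≤ gronAux η K (n + 1) := by
  have h := gronAux_nonneg hη hK n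
  simp [gronAux]
  nlinarith

private lemma rpow_le_max {a b x r : ℝ} (ha : 0 < a) (hax : a ≤ x) (hxb : x ≤ b) :
    x ^ r ≤ max (a ^ r) (b ^ r) := by
  rcases le_or_gt 0 r with hr | hr
  · exact le_max_of_le_right (Real.rpow_le_rpow (ha.le.trans hax) hxb hr)
  · exact le_max_of_le_left (Real.rpow_le_rpow_of_nonpos ha hax hr.le)

set_option maxHeartbeats 1000000 in
theorem gronwall_volterra_one_singularity (βt β η δ T : ℝ)
    (h1 : βt < 1) (h2 : β > βt - 1) (hη : 0 < η) (hδ : 0 < δ) (hT : 0 < T) :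
    ∃ C : ℝ, ∀ f : ℝ → ℝ, Measurable f →
      (∀ t ∈ Set.Icc (0 : ℝ) T, 0 ≤ f t) →
      (∃ M : ℝ, ∀ t ∈ Set.Icc (0 : ℝ) T, f t ≤ M) →
      (∀ t ∈ Set.Icc (0 : ℝ) T, f t ≤ η + δ * t ^ β * ∫ s in (0 : ℝ)..t, f s / s ^ βt) →
      ∀ t ∈ Set.Icc (0 : ℝ) T, f t ≤ C := by
  have hr : (-1 : ℝ) < -βt := by linarith
  have h1βt : 0 < 1 - βt := by linarith
  have hp : 0 < β + (1 - βt) := by linarith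
  -- first threshold
  set h₁ : ℝ := min T (((1 - βt) / (2 * δ)) ^ (β + (1 - βt))⁻¹) with hh₁def
  have hh₁pos : 0 < h₁ :=
    lt_min hT (Real.rpow_pos_of_pos (by positivity) _)
  have hh₁T : h₁ ≤ T := min_le_left _ _
  -- contraction estimate on (0, h₁]
  have hcontr : ∀ t ∈ Set.Ioc (0 : ℝ) h₁, δ * t ^ β * (t ^ (1 - βt) / (1 - βt)) ≤ 1 / 2 := by
    intro t ht
    have htpos : 0 < t := ht.1
    have hsum : t ^ β * t ^ (1 - βt) = t ^ (β + (1 - βt)) := (Real.rpow_add htpos _ _).symm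
    have hle : t ^ (β + (1 - βt)) ≤ (1 - βt) / (2 * δ) := by
      have h1' : t ^ (β + (1 - βt)) ≤ (((1 - βt) / (2 * δ)) ^ (β + (1 - βt))⁻¹) ^ (β + (1 - βt)) :=
        Real.rpow_le_rpow htpos.le (ht.2.trans (min_le_right _ _)) hp.le
      rwa [Real.rpow_inv_rpow (by positivity) hp.ne'] at h1'
    calc δ * t ^ β * (t ^ (1 - βt) / (1 - βt)) = δ * (t ^ (β + (1 - βt))) / (1 - βt) := by
          rw [← hsum]; ring
      _ ≤ δ * ((1 - βt) / (2 * δ)) / (1 - βt) := by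
          apply div_le_div_of_nonneg_right _ h1βt.le
          exact mul_le_mul_of_nonneg_left hle hδ.le
      _ = 1 / 2 := by field_simp
  -- constants for later intervals
  set B : ℝ := max (h₁ ^ β) (T ^ β) with hBdef
  set c : ℝ := max (h₁ ^ (-βt)) (T ^ (-βt)) with hcdef
  have hBpos : 0 < B := lt_max_of_lt_left (Real.rpow_pos_of_pos hh₁pos _)
  have hcpos : 0 < c := lt_max_of_lt_left (Real.rpow_pos_of_pos hh₁pos _)
  set h : ℝ := (2 * (δ * B * c))⁻¹ with hhdef
  have hhpos : 0 < h := by positivity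
  set φT : ℝ := T ^ (1 - βt) / (1 - βt) with hφTdef
  have hφTpos : 0 < φT := by
    apply div_pos (Real.rpow_pos_of_pos hT _) h1βt
  set K : ℝ := δ * B * φT with hKdef
  have hKpos : 0 < K := by positivity
  set N : ℕ := ⌈T / h⌉₊ with hNdef
  refine ⟨gronAux η K N, ?_⟩
  intro f hfm hfnn ⟨M, hfM⟩ hineq
  -- integrability of the integrand
  have hMnn : 0 ≤ M := le_trans (hfnn 0 ⟨le_rfl, hT.le⟩) (hfM 0 ⟨le_rfl, hT.le⟩)
  have hint : ∀ t ∈ Set.Icc (0 : ℝ) T,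
      IntervalIntegrable (fun s => f s / s ^ βt) volume 0 t := by
    intro t ht
    have hg : IntervalIntegrable (fun s => M * s ^ (-βt)) volume 0 t :=
      (intervalIntegrable_rpow' hr).const_mul M
    apply hg.mono_fun'
    · exact ((hfm.div (by measurability : Measurable fun s : ℝ => s ^ βt)).aestronglyMeasurable).restrict
    · filter_upwards [ae_restrict_mem measurableSet_uIoc] with s hs
      rw [Set.uIoc_of_le ht.1] at hs
      have hs0 : 0 < s := hs.1
      have hsT : s ∈ Set.Icc (0 : ℝ) T := ⟨hs0.le, hs.2.trans ht.2⟩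
      have h1 : f s / s ^ βt = f s * s ^ (-βt) := by
        rw [Real.rpow_neg hs0.le, div_eq_mul_inv]
      rw [Real.norm_eq_abs, abs_of_nonneg (by
        exact div_nonneg (hfnn s hsT) (Real.rpow_nonneg hs0.le _)), h1]
      exact mul_le_mul_of_nonneg_right (hfM s hsT) (Real.rpow_nonneg hs0.le _)
  -- integrand is pointwise bounded by a constant times s^(-βt) whenever the constant bounds f
  have hptbound : ∀ (S : ℝ), ∀ s ∈ Set.Icc (0 : ℝ) T, f s ≤ S →
      f s / s ^ βt ≤ S * s ^ (-βt) := by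
    intro S s hs hfs
    rcases eq_or_lt_of_le hs.1 with h0 | h0
    · rcases lt_trichotomy βt 0 with hb | hb | hb
      · rw [← h0]
        rw [Real.zero_rpow hb.ne, Real.zero_rpow (by linarith : -βt ≠ 0)]
        simp
      · rw [← h0] at hfs ⊢; rw [hb]; simpa using hfs
      · rw [← h0]
        rw [Real.zero_rpow hb.ne', Real.zero_rpow (by intro hc; linarith [neg_eq_zero.mp hc] : -βt ≠ 0)]
        simp
    · rw [Real.rpow_neg h0.le, div_eq_mul_inv]
      exact mul_le_mul_of_nonneg_right hfs (by positivity)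
  -- value of the singular integral
  have hphi : ∀ x : ℝ, 0 ≤ x → (∫ s in (0:ℝ)..x, s ^ (-βt)) = x ^ (1 - βt) / (1 - βt) := by
    intro x hx
    rw [integral_rpow (Or.inl hr)]
    rw [Real.zero_rpow (by linarith : -βt + 1 ≠ 0)]
    ring_nf
  -- Stage 1 : on [0, h₁], f ≤ 2η
  have stage1 : ∀ t ∈ Set.Icc (0 : ℝ) h₁, f t ≤ 2 * η := by
    set S : ℝ := sSup (f '' Set.Icc 0 h₁) with hSdef
    have hne : (f '' Set.Icc 0 h₁).Nonempty := ⟨f 0, 0, ⟨le_rfl, hh₁pos.le⟩, rfl⟩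
    have hbdd : BddAbove (f '' Set.Icc 0 h₁) := by
      refine ⟨M, ?_⟩
      rintro y ⟨s, hs, rfl⟩
      exact hfM s ⟨hs.1, hs.2.trans hh₁T⟩
    have hfS : ∀ s ∈ Set.Icc (0 : ℝ) h₁, f s ≤ S := fun s hs => le_csSup hbdd ⟨s, hs, rfl⟩
    have hSnn : 0 ≤ S := le_trans (hfnn 0 ⟨le_rfl, hT.le⟩) (hfS 0 ⟨le_rfl, hh₁pos.le⟩)
    have hS2 : S ≤ η + S / 2 := by
      apply csSup_le hne
      rintro y ⟨t, ht, rfl⟩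
      have htT : t ∈ Set.Icc (0 : ℝ) T := ⟨ht.1, ht.2.trans hh₁T⟩
      rcases eq_or_lt_of_le ht.1 with h0 | h0
      · have := hineq t htT
        rw [← h0] at this ⊢
        simpa using le_trans this (by simp; linarith)
      · have hI : (∫ s in (0:ℝ)..t, f s / s ^ βt) ≤ S * (t ^ (1 - βt) / (1 - βt)) := by
          have hmono : (∫ s in (0:ℝ)..t, f s / s ^ βt) ≤ ∫ s in (0:ℝ)..t, S * s ^ (-βt) := by
            apply integral_mono_on ht.1 (hint t htT)
              ((intervalIntegrable_rpow' hr).const_mul S)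
            intro s hs
            exact hptbound S s ⟨hs.1, hs.2.trans htT.2⟩ (hfS s ⟨hs.1, hs.2.trans ht.2⟩)
          rwa [intervalIntegral.integral_const_mul, hphi t ht.1] at hmono
        have htb : δ * t ^ β * (t ^ (1 - βt) / (1 - βt)) ≤ 1 / 2 :=
          hcontr t ⟨h0, ht.2⟩
        calc f t ≤ η + δ * t ^ β * ∫ s in (0:ℝ)..t, f s / s ^ βt := hineq t htT
          _ ≤ η + δ * t ^ β * (S * (t ^ (1 - βt) / (1 - βt))) := by
              have hnn : 0 ≤ δ * t ^ β := by positivity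
              have := mul_le_mul_of_nonneg_left hI hnn
              linarith
          _ = η + S * (δ * t ^ β * (t ^ (1 - βt) / (1 - βt))) := by ring
          _ ≤ η + S * (1 / 2) := by
              have := mul_le_mul_of_nonneg_left htb hSnn
              linarith
          _ = η + S / 2 := by ring
    intro t ht
    linarith [hfS t ht]
  -- Stage 2 : induction over intervals of length h
  have stage2 : ∀ n : ℕ, ∀ t ∈ Set.Icc (0 : ℝ) (min (h₁ + n * h) T),
      f t ≤ gronAux η K n := by
    intro n
    induction n with
    | zero =>
      intro t ht
      simp only [Nat.cast_zero, zero_mul, add_zero, min_eq_left hh₁T] at ht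
      simpa [gronAux] using stage1 t ht
    | succ n ih =>
      set u : ℝ := min (h₁ + (n + 1 : ℕ) * h) T with hudef
      have hu0 : 0 ≤ u := le_min (by positivity) hT.le
      have huT : u ≤ T := min_le_right _ _
      set S : ℝ := sSup (f '' Set.Icc 0 u) with hSdef
      have hne : (f '' Set.Icc 0 u).Nonempty := ⟨f 0, 0, ⟨le_rfl, hu0⟩, rfl⟩
      have hbdd : BddAbove (f '' Set.Icc 0 u) := by
        refine ⟨M, ?_⟩
        rintro y ⟨s, hs, rfl⟩
        exact hfM s ⟨hs.1, hs.2.trans huT⟩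
      have hfS : ∀ s ∈ Set.Icc (0 : ℝ) u, f s ≤ S := fun s hs => le_csSup hbdd ⟨s, hs, rfl⟩
      have hSnn : 0 ≤ S := le_trans (hfnn 0 ⟨le_rfl, hT.le⟩) (hfS 0 ⟨le_rfl, hu0⟩)
      have han : 0 ≤ gronAux η K n := gronAux_nonneg hη.le hKpos.le n
      have key : ∀ t ∈ Set.Icc (0 : ℝ) u,
          f t ≤ max (gronAux η K n) (η + K * gronAux η K n + S / 2) := by
        intro t ht
        set a' : ℝ := h₁ + n * h with ha'def
        have ha'pos : 0 < a' := by positivity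
        rcases le_or_gt t a' with hta | hta
        · exact le_max_of_le_left (ih t ⟨ht.1, le_min hta (ht.2.trans huT)⟩)
        · -- t ∈ (a', u], a' ≤ t ≤ T, t - a' ≤ h
          have htT : t ∈ Set.Icc (0 : ℝ) T := ⟨ht.1, ht.2.trans huT⟩
          have hth : t - a' ≤ h := by
            have : t ≤ h₁ + (n + 1 : ℕ) * h := ht.2.trans (min_le_left _ _)
            push_cast at this ⊢
            nlinarith
          have ha'T : a' ≤ T := hta.le.trans htT.2
          -- split the integral
          have hint1 : IntervalIntegrable (fun s => f s / s ^ βt) volume 0 a' :=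
            hint a' ⟨ha'pos.le, ha'T⟩
          have hintt : IntervalIntegrable (fun s => f s / s ^ βt) volume 0 t := hint t htT
          have hint2 : IntervalIntegrable (fun s => f s / s ^ βt) volume a' t := by
            apply hintt.mono_set'
            rw [Set.uIoc_of_le hta.le, Set.uIoc_of_le htT.1]
            exact Set.Ioc_subset_Ioc ha'pos.le le_rfl
          have hsplit : (∫ s in (0:ℝ)..t, f s / s ^ βt)
              = (∫ s in (0:ℝ)..a', f s / s ^ βt) + ∫ s in a'..t, f s / s ^ βt :=
            (integral_add_adjacent_intervals hint1 hint2).symm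
          -- bound the first piece
          have hI1 : (∫ s in (0:ℝ)..a', f s / s ^ βt) ≤ gronAux η K n * φT := by
            have hmono : (∫ s in (0:ℝ)..a', f s / s ^ βt)
                ≤ ∫ s in (0:ℝ)..a', gronAux η K n * s ^ (-βt) := by
              apply integral_mono_on ha'pos.le hint1
                ((intervalIntegrable_rpow' hr).const_mul _)
              intro s hs
              exact hptbound _ s ⟨hs.1, hs.2.trans ha'T⟩
                (ih s ⟨hs.1, le_min hs.2 (hs.2.trans ha'T)⟩)
            rw [intervalIntegral.integral_const_mul, hphi a' ha'pos.le] at hmono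
            refine hmono.trans ?_
            apply mul_le_mul_of_nonneg_left _ han
            rw [hφTdef]
            apply div_le_div_of_nonneg_right _ h1βt.le
            exact Real.rpow_le_rpow ha'pos.le ha'T h1βt.le
          -- bound the second piece
          have hI2 : (∫ s in a'..t, f s / s ^ βt) ≤ S * c * (t - a') := by
            have hmono : (∫ s in a'..t, f s / s ^ βt) ≤ ∫ _ in a'..t, S * c := by
              apply integral_mono_on hta.le hint2 intervalIntegrable_const
              intro s hs
              have hs0 : 0 < s := ha'pos.trans_le hs.1
              have hh₁s : h₁ ≤ s := le_trans (le_add_of_nonneg_right (by positivity) : h₁ ≤ a') hs.1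
              have hsT : s ≤ T := hs.2.trans htT.2
              have h1 : f s / s ^ βt = f s * s ^ (-βt) := by
                rw [Real.rpow_neg hs0.le, div_eq_mul_inv]
              rw [h1]
              have hcs : s ^ (-βt) ≤ c := rpow_le_max hh₁pos hh₁s hsT
              exact mul_le_mul (hfS s ⟨hs0.le, hs.2.trans ht.2⟩) hcs
                (Real.rpow_nonneg hs0.le _) hSnn
            rwa [intervalIntegral.integral_const, smul_eq_mul, mul_comm] at hmono
          -- nonnegativity of integrals
          have hI1nn : 0 ≤ ∫ s in (0:ℝ)..a', f s / s ^ βt := by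
            apply integral_nonneg ha'pos.le
            intro s hs
            exact div_nonneg (hfnn s ⟨hs.1, hs.2.trans ha'T⟩) (Real.rpow_nonneg hs.1 _)
          have hI2nn : 0 ≤ ∫ s in a'..t, f s / s ^ βt := by
            apply integral_nonneg hta.le
            intro s hs
            have hs0 : 0 ≤ s := ha'pos.le.trans hs.1
            exact div_nonneg (hfnn s ⟨hs0, hs.2.trans htT.2⟩) (Real.rpow_nonneg hs0 _)
          -- bound δ t^β
          have htB : t ^ β ≤ B := rpow_le_max hh₁pos (le_trans (le_add_of_nonneg_right (by positivity) : h₁ ≤ a') hta.le) htT.2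
          have htβnn : 0 ≤ t ^ β := Real.rpow_nonneg htT.1 _
          refine le_max_of_le_right ?_
          calc f t ≤ η + δ * t ^ β * ∫ s in (0:ℝ)..t, f s / s ^ βt := hineq t htT
            _ = η + δ * t ^ β * ((∫ s in (0:ℝ)..a', f s / s ^ βt) + ∫ s in a'..t, f s / s ^ βt) := by
                rw [hsplit]
            _ ≤ η + δ * B * ((∫ s in (0:ℝ)..a', f s / s ^ βt) + ∫ s in a'..t, f s / s ^ βt) := by
                have hInn : 0 ≤ (∫ s in (0:ℝ)..a', f s / s ^ βt) + ∫ s in a'..t, f s / s ^ βt := by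
                  linarith
                have : δ * t ^ β ≤ δ * B := mul_le_mul_of_nonneg_left htB hδ.le
                nlinarith
            _ ≤ η + δ * B * (gronAux η K n * φT + S * c * h) := by
                have hBδ : 0 ≤ δ * B := by positivity
                have h2 : (∫ s in a'..t, f s / s ^ βt) ≤ S * c * h := by
                  refine hI2.trans ?_
                  have : 0 ≤ S * c := by positivity
                  nlinarith
                nlinarith
            _ = η + K * gronAux η K n + δ * B * (S * c * h) := by
                rw [hKdef]; ring
            _ = η + K * gronAux η K n + S / 2 := by
                rw [hhdef]
                field_simp
      have hS : S ≤ gronAux η K (n + 1) := by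
        have hmax := csSup_le hne (by rintro y ⟨t, ht, rfl⟩; exact key t ht)
        by_cases hc1 : S ≤ gronAux η K n
        · exact hc1.trans (gronAux_mono hη.le hKpos.le n)
        · have hS2 : S ≤ η + K * gronAux η K n + S / 2 :=
            (le_max_iff.mp hmax).resolve_left hc1
          show S ≤ gronAux η K n + 2 * (η + K * gronAux η K n)
          linarith
      intro t ht
      exact (hfS t ht).trans hS
  -- conclude
  intro t ht
  have hTN : T ≤ h₁ + N * h := by
    have h1' : T / h ≤ (N : ℝ) := Nat.le_ceil _
    have : T ≤ N * h := by
      rw [div_le_iff₀ hhpos] at h1'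
      linarith
    linarith
  exact stage2 N t ⟨ht.1, le_min (ht.2.trans hTN) ht.2⟩
end

section
/- Gronwall–Volterra lemma with two singularities: let β̃, β̂ < 1, β̌ > β̃ + β̂ − 1 and a, b, T > 0. There exists a finite constant C depending only on β̃, β̂, β̌, a, b, T such that any measurable bounded function f : [0,T] → R_+ satisfying f(t) ≤ a + b t^{β̌} ∫_0^t f(s) s^{-β̃} (t − s)^{-β̂} ds for all t ∈ [0,T] obeys sup_{t∈[0,T]} f(t) ≤ C. -/
open MeasureTheory Set

lemma gvts_half_bound (e : ℝ) {x t : ℝ} (ht : 0 < t) (hx : t/2 ≤ x) (hxt : x ≤ t) :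
    x ^ (-e) ≤ 2 ^ (max e 0) * t ^ (-e) := by
  have ht2 : 0 < t / 2 := by linarith
  rcases le_or_gt 0 e with he | he
  · have h1 : x ^ (-e) ≤ (t/2) ^ (-e) :=
      Real.rpow_le_rpow_of_nonpos ht2 hx (neg_nonpos.mpr he)
    have h2 : (t/2) ^ (-e) = 2 ^ e * t ^ (-e) := by
      rw [Real.div_rpow ht.le (by norm_num : (0:ℝ) ≤ 2), Real.rpow_neg (by norm_num : (0:ℝ) ≤ 2)]
      field_simp
    rw [max_eq_left he]
    calc x ^ (-e) ≤ (t/2) ^ (-e) := h1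
      _ = 2 ^ e * t ^ (-e) := h2
  · have h1 : x ^ (-e) ≤ t ^ (-e) :=
      Real.rpow_le_rpow (by linarith) hxt (by linarith)
    rw [max_eq_right he.le, Real.rpow_zero, one_mul]
    exact h1

lemma gvts_delta (κ ρ : ℝ) (hκ : 0 < κ) (hρ : 0 < ρ) :
    ∃ δ > 0, ∀ x : ℝ, 0 < x → x ≤ δ → κ * x ^ ρ ≤ 1/2 := by
  refine ⟨((2*κ)⁻¹) ^ ρ⁻¹, Real.rpow_pos_of_pos (by positivity) _, fun x hx hxδ => ?_⟩
  have h1 : x ^ ρ ≤ (((2*κ)⁻¹) ^ ρ⁻¹) ^ ρ := Real.rpow_le_rpow hx.le hxδ hρ.le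
  have h2 : (((2*κ)⁻¹ : ℝ) ^ ρ⁻¹) ^ ρ = (2*κ)⁻¹ := by
    rw [← Real.rpow_mul (by positivity), inv_mul_cancel₀ hρ.ne', Real.rpow_one]
  rw [h2] at h1
  have := mul_le_mul_of_nonneg_left h1 hκ.le
  calc κ * x ^ ρ ≤ κ * (2*κ)⁻¹ := this
    _ = 1/2 := by field_simp

lemma gvts_K_left (βt βh : ℝ) (h1 : βt < 1) (h2 : βh < 1) {t : ℝ} (ht : 0 < t) :
    IntervalIntegrable (fun s => s ^ (-βt) * (t - s) ^ (-βh)) volume 0 (t/2) ∧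
    (∫ s in (0:ℝ)..(t/2), s ^ (-βt) * (t - s) ^ (-βh)) ≤
      2 ^ (max βh 0) / (1 - βt) * t ^ (1 - βt - βh) := by
  have hbt : (-1:ℝ) < -βt := by linarith
  set cB : ℝ := 2 ^ (max βh 0) * t ^ (-βh) with hcB
  have hcB0 : 0 ≤ cB := by positivity
  have hg1 : IntervalIntegrable (fun s : ℝ => s ^ (-βt) * cB) volume 0 (t/2) :=
    (intervalIntegral.intervalIntegrable_rpow' hbt).mul_const cB
  have hpt : ∀ s ∈ Icc (0:ℝ) (t/2), s ^ (-βt) * (t - s) ^ (-βh) ≤ s ^ (-βt) * cB := by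
    intro s hs
    have hb : (t - s) ^ (-βh) ≤ cB := by
      rw [hcB]
      exact gvts_half_bound βh ht (by linarith [hs.2]) (by linarith [hs.1])
    exact mul_le_mul_of_nonneg_left hb (Real.rpow_nonneg hs.1 _)
  have hKm : Measurable fun s : ℝ => s ^ (-βt) * (t - s) ^ (-βh) := by fun_prop
  have hKi : IntervalIntegrable (fun s => s ^ (-βt) * (t - s) ^ (-βh)) volume 0 (t/2) := by
    apply hg1.mono_fun' hKm.aestronglyMeasurable
    rw [Set.uIoc_of_le (by linarith : (0:ℝ) ≤ t/2),
      ← Measure.restrict_congr_set Ioo_ae_eq_Ioc]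
    refine (ae_restrict_iff' measurableSet_Ioo).mpr (ae_of_all _ fun s hs => ?_)
    show ‖s ^ (-βt) * (t - s) ^ (-βh)‖ ≤ s ^ (-βt) * cB
    rw [Real.norm_eq_abs, abs_of_nonneg
      (mul_nonneg (Real.rpow_nonneg hs.1.le _) (Real.rpow_nonneg (by linarith [hs.2]) _))]
    exact hpt s ⟨hs.1.le, hs.2.le⟩
  refine ⟨hKi, ?_⟩
  have hmono := intervalIntegral.integral_mono_on (by linarith : (0:ℝ) ≤ t/2) hKi hg1 hpt
  have hint : (∫ s in (0:ℝ)..(t/2), s ^ (-βt) * cB) = (t/2) ^ (-βt+1) / (-βt+1) * cB := by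
    rw [intervalIntegral.integral_mul_const, integral_rpow (Or.inl hbt),
      Real.zero_rpow (by linarith : -βt+1 ≠ 0)]
    ring
  calc (∫ s in (0:ℝ)..(t/2), s ^ (-βt) * (t - s) ^ (-βh))
      ≤ (t/2) ^ (-βt+1) / (-βt+1) * cB := by rw [← hint]; exact hmono
    _ ≤ t ^ (-βt+1) / (-βt+1) * cB := by
        have := Real.rpow_le_rpow (by linarith : (0:ℝ) ≤ t/2)
          (by linarith : t/2 ≤ t) (by linarith : (0:ℝ) ≤ -βt+1)
        have h1' : (0:ℝ) < -βt+1 := by linarith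
        gcongr
    _ = 2 ^ (max βh 0) / (1 - βt) * t ^ (1 - βt - βh) := by
        rw [hcB]
        rw [div_mul_eq_mul_div, mul_comm (t ^ (-βt+1)), mul_assoc,
          ← Real.rpow_add ht]
        rw [show -βh + (-βt+1) = 1 - βt - βh by ring]
        ring

lemma gvts_K_tail (βt βh : ℝ) (h1 : βt < 1) (h2 : βh < 1) {t r : ℝ} (ht : 0 < t)
    (hr : 0 < r) (hrt : t/2 ≤ t - r) :
    IntervalIntegrable (fun s => s ^ (-βt) * (t - s) ^ (-βh)) volume (t-r) t ∧
    (∫ s in (t-r)..t, s ^ (-βt) * (t - s) ^ (-βh)) ≤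
      2 ^ (max βt 0) * t ^ (-βt) * (r ^ (-βh+1) / (-βh+1)) := by
  have hbh : (-1:ℝ) < -βh := by linarith
  set cA : ℝ := 2 ^ (max βt 0) * t ^ (-βt) with hcA
  have hcA0 : 0 ≤ cA := by positivity
  have hsub : IntervalIntegrable (fun s : ℝ => (t - s) ^ (-βh)) volume (t-r) t := by
    have := (intervalIntegral.intervalIntegrable_rpow' hbh (a := 0) (b := r)).comp_sub_left t
    rw [sub_zero] at this
    exact this.symm
  have hg2 : IntervalIntegrable (fun s : ℝ => cA * (t - s) ^ (-βh)) volume (t-r) t :=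
    hsub.const_mul cA
  have hpt : ∀ s ∈ Icc (t-r) t, s ^ (-βt) * (t - s) ^ (-βh) ≤ cA * (t - s) ^ (-βh) := by
    intro s hs
    have hb : s ^ (-βt) ≤ cA := by
      rw [hcA]
      exact gvts_half_bound βt ht (le_trans hrt hs.1) hs.2
    exact mul_le_mul_of_nonneg_right hb
      (Real.rpow_nonneg (show (0:ℝ) ≤ t - s by linarith [hs.2]) _)
  have hKm : Measurable fun s : ℝ => s ^ (-βt) * (t - s) ^ (-βh) := by fun_prop
  have hKi : IntervalIntegrable (fun s => s ^ (-βt) * (t - s) ^ (-βh)) volume (t-r) t := by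
    apply hg2.mono_fun' hKm.aestronglyMeasurable
    rw [Set.uIoc_of_le (by linarith : t - r ≤ t),
      ← Measure.restrict_congr_set Ioo_ae_eq_Ioc]
    refine (ae_restrict_iff' measurableSet_Ioo).mpr (ae_of_all _ fun s hs => ?_)
    show ‖s ^ (-βt) * (t - s) ^ (-βh)‖ ≤ cA * (t - s) ^ (-βh)
    rw [Real.norm_eq_abs, abs_of_nonneg
      (mul_nonneg (Real.rpow_nonneg (by nlinarith [hs.1] : (0:ℝ) ≤ s) _)
        (Real.rpow_nonneg (by linarith [hs.2]) _))]
    exact hpt s ⟨hs.1.le, hs.2.le⟩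
  refine ⟨hKi, ?_⟩
  have hmono := intervalIntegral.integral_mono_on (by linarith : t - r ≤ t) hKi hg2 hpt
  have hint : (∫ s in (t-r)..t, cA * (t - s) ^ (-βh)) = cA * (r ^ (-βh+1) / (-βh+1)) := by
    rw [intervalIntegral.integral_const_mul]
    congr 1
    have := intervalIntegral.integral_comp_sub_left (a := t - r) (b := t)
      (fun x : ℝ => x ^ (-βh)) t
    rw [sub_self, sub_sub_cancel] at this
    rw [this, integral_rpow (Or.inl hbh),
      Real.zero_rpow (by linarith : -βh+1 ≠ 0), sub_zero]
  calc (∫ s in (t-r)..t, s ^ (-βt) * (t - s) ^ (-βh))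
      ≤ ∫ s in (t-r)..t, cA * (t - s) ^ (-βh) := hmono
    _ = cA * (r ^ (-βh+1) / (-βh+1)) := hint

lemma gvts_K_full (βt βh : ℝ) (h1 : βt < 1) (h2 : βh < 1) {t : ℝ} (ht : 0 < t) :
    IntervalIntegrable (fun s => s ^ (-βt) * (t - s) ^ (-βh)) volume 0 t ∧
    (∫ s in (0:ℝ)..t, s ^ (-βt) * (t - s) ^ (-βh)) ≤
      (2 ^ (max βh 0) / (1 - βt) + 2 ^ (max βt 0) / (1 - βh)) * t ^ (1 - βt - βh) := by
  obtain ⟨hL, hLb⟩ := gvts_K_left βt βh h1 h2 ht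
  obtain ⟨hR, hRb⟩ := gvts_K_tail βt βh h1 h2 ht (r := t/2) (by linarith) (by linarith)
  rw [show t - t/2 = t/2 by ring] at hR hRb
  refine ⟨hL.trans hR, ?_⟩
  rw [← intervalIntegral.integral_add_adjacent_intervals hL hR]
  have hRb2 : (∫ s in (t/2)..t, s ^ (-βt) * (t - s) ^ (-βh)) ≤
      2 ^ (max βt 0) / (1 - βh) * t ^ (1 - βt - βh) := by
    refine hRb.trans ?_
    have h3 : ((t/2) : ℝ) ^ (-βh+1) ≤ t ^ (-βh+1) :=
      Real.rpow_le_rpow (by linarith) (by linarith) (by linarith)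
    have h4 : (0:ℝ) < -βh+1 := by linarith
    calc 2 ^ (max βt 0) * t ^ (-βt) * ((t/2) ^ (-βh+1) / (-βh+1))
        ≤ 2 ^ (max βt 0) * t ^ (-βt) * (t ^ (-βh+1) / (-βh+1)) := by
          have h5 : (0:ℝ) ≤ 2 ^ (max βt 0) * t ^ (-βt) := by positivity
          gcongr
      _ = 2 ^ (max βt 0) / (1-βh) * (t ^ (-βt) * t ^ (-βh+1)) := by
          rw [show (1:ℝ)-βh = -βh+1 by ring]; ring
      _ = 2 ^ (max βt 0) / (1-βh) * t ^ (1-βt-βh) := by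
          rw [← Real.rpow_add ht, show -βt + (-βh+1) = 1-βt-βh by ring]
  rw [add_mul]
  exact add_le_add hLb hRb2

lemma gvts_F_bound (βt βh : ℝ) (f : ℝ → ℝ) (hf : Measurable f) {c d t S : ℝ}
    (h0 : 0 ≤ c) (hcd : c ≤ d) (hdt : d ≤ t) (hS : 0 ≤ S)
    (hK : IntervalIntegrable (fun s => s ^ (-βt) * (t - s) ^ (-βh)) volume c d)
    (hfb : ∀ s ∈ Set.Ioo c d, 0 ≤ f s ∧ f s ≤ S) :
    IntervalIntegrable (fun s => f s / (s ^ βt * (t - s) ^ βh)) volume c d ∧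
    (∫ s in c..d, f s / (s ^ βt * (t - s) ^ βh)) ≤
      S * ∫ s in c..d, s ^ (-βt) * (t - s) ^ (-βh) := by
  have hSK : IntervalIntegrable (fun s => S * (s ^ (-βt) * (t - s) ^ (-βh))) volume c d :=
    hK.const_mul S
  have hFm : Measurable fun s : ℝ => f s / (s ^ βt * (t - s) ^ βh) := by fun_prop
  have hptw : ∀ s ∈ Set.Ioo c d, 0 ≤ f s / (s ^ βt * (t - s) ^ βh) ∧
      f s / (s ^ βt * (t - s) ^ βh) ≤ S * (s ^ (-βt) * (t - s) ^ (-βh)) := by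
    intro s hs
    have hs0 : 0 < s := lt_of_le_of_lt h0 hs.1
    have hts : 0 < t - s := by have := hs.2; linarith [hdt]
    have heq : f s / (s ^ βt * (t - s) ^ βh) = f s * (s ^ (-βt) * (t - s) ^ (-βh)) := by
      rw [Real.rpow_neg hs0.le, Real.rpow_neg hts.le, div_eq_mul_inv, mul_inv]
    obtain ⟨hf0, hfS⟩ := hfb s hs
    have hKpos : (0:ℝ) ≤ s ^ (-βt) * (t - s) ^ (-βh) := by positivity
    constructor
    · rw [heq]; positivity
    · rw [heq]
      exact mul_le_mul_of_nonneg_right hfS hKpos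
  have hFi : IntervalIntegrable (fun s => f s / (s ^ βt * (t - s) ^ βh)) volume c d := by
    apply hSK.mono_fun' hFm.aestronglyMeasurable
    rw [Set.uIoc_of_le hcd, ← Measure.restrict_congr_set Ioo_ae_eq_Ioc]
    refine (ae_restrict_iff' measurableSet_Ioo).mpr (ae_of_all _ fun s hs => ?_)
    show ‖f s / (s ^ βt * (t - s) ^ βh)‖ ≤ S * (s ^ (-βt) * (t - s) ^ (-βh))
    obtain ⟨hge, hle⟩ := hptw s hs
    rw [Real.norm_eq_abs, abs_of_nonneg hge]
    exact hle
  refine ⟨hFi, ?_⟩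
  have hae : (fun s => f s / (s ^ βt * (t - s) ^ βh)) ≤ᵐ[volume.restrict (Set.Icc c d)]
      fun s => S * (s ^ (-βt) * (t - s) ^ (-βh)) := by
    rw [← Measure.restrict_congr_set Ioo_ae_eq_Icc]
    exact (ae_restrict_iff' measurableSet_Ioo).mpr (ae_of_all _ fun s hs => (hptw s hs).2)
  have hmono := intervalIntegral.integral_mono_ae_restrict hcd hFi hSK hae
  rwa [intervalIntegral.integral_const_mul] at hmono
theorem gronwall_volterra_two_singularities (βt βh βc a b T : ℝ)
    (h1 : βt < 1) (h2 : βh < 1) (h3 : βc > βt + βh - 1)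
    (ha : 0 < a) (hb : 0 < b) (hT : 0 < T) :
    ∃ C : ℝ, ∀ f : ℝ → ℝ, Measurable f →
      (∀ t ∈ Set.Icc (0 : ℝ) T, 0 ≤ f t) →
      (∃ M : ℝ, ∀ t ∈ Set.Icc (0 : ℝ) T, f t ≤ M) →
      (∀ t ∈ Set.Icc (0 : ℝ) T,
        f t ≤ a + b * t ^ βc * ∫ s in (0 : ℝ)..t, f s / (s ^ βt * (t - s) ^ βh)) →
      ∀ t ∈ Set.Icc (0 : ℝ) T, f t ≤ C := by
  set c1 : ℝ := 2 ^ (max βt 0) with hc1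
  set c2 : ℝ := 2 ^ (max βh 0) with hc2
  have hc10 : 0 < c1 := Real.rpow_pos_of_pos two_pos _
  have hc20 : 0 < c2 := Real.rpow_pos_of_pos two_pos _
  set c3 : ℝ := c2 / (1 - βt) + c1 / (1 - βh) with hc3
  have hc30 : 0 < c3 :=
    add_pos (div_pos hc20 (by linarith)) (div_pos hc10 (by linarith))
  set γ : ℝ := βc + 1 - βt - βh with hγ
  have hγ0 : 0 < γ := by rw [hγ]; linarith
  set A : ℝ := b * c3 * T ^ γ with hA
  have hA0 : 0 ≤ A := by
    apply mul_nonneg (mul_nonneg hb.le hc30.le) (Real.rpow_nonneg hT.le _)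
  obtain ⟨δ1, hδ1p, hδ1⟩ := gvts_delta (b * c3) γ (mul_pos hb hc30) hγ0
  obtain ⟨δ2, hδ2p, hδ2⟩ := gvts_delta (b * c1 * T ^ (βc - βt) / (1 - βh)) (1 - βh)
    (div_pos (mul_pos (mul_pos hb hc10) (Real.rpow_pos_of_pos hT _)) (by linarith))
    (by linarith)
  obtain ⟨δ3, hδ3p, hδ3⟩ := gvts_delta (b * c1 * 2 ^ (βc - βt) / (1 - βh)) γ
    (div_pos (mul_pos (mul_pos hb hc10) (Real.rpow_pos_of_pos two_pos _)) (by linarith))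
    hγ0
  set δ : ℝ := min (δ1/2) (min δ2 δ3) with hδdef
  have hδ0 : 0 < δ := lt_min (by linarith) (lt_min hδ2p hδ3p)
  have hδa : 2 * δ ≤ δ1 := by
    have := min_le_left (δ1/2) (min δ2 δ3); rw [← hδdef] at this; linarith
  have hδb : δ ≤ δ2 := le_trans (min_le_right _ _) (min_le_left _ _)
  have hδc : δ ≤ δ3 := le_trans (min_le_right _ _) (min_le_right _ _)
  obtain ⟨n, hn⟩ := exists_nat_ge (T / δ)
  let g : ℕ → ℝ := fun k => Nat.rec (2*a) (fun _ ih => 2*a + 2*A*ih) k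
  have hg0 : g 0 = 2*a := rfl
  have hgs : ∀ k, g (k+1) = 2*a + 2*A * g k := fun k => rfl
  refine ⟨g n, ?_⟩
  intro f hfmeas hfnn hMex hineq
  obtain ⟨M, hM⟩ := hMex
  set S : ℝ → ℝ := fun u => sSup (f '' Set.Icc 0 (min u T)) with hSdef
  have hbdd : ∀ u : ℝ, BddAbove (f '' Set.Icc 0 (min u T)) := by
    intro u
    refine ⟨M, fun y hy => ?_⟩
    obtain ⟨x, hx, rfl⟩ := hy
    exact hM x ⟨hx.1, le_trans hx.2 (min_le_right _ _)⟩
  have hne : ∀ u : ℝ, 0 ≤ u → (f '' Set.Icc 0 (min u T)).Nonempty :=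
    fun u hu => ⟨f 0, 0, ⟨le_refl 0, le_min hu hT.le⟩, rfl⟩
  have hSle : ∀ u, 0 ≤ u → ∀ x, 0 ≤ x → x ≤ u → x ≤ T → f x ≤ S u :=
    fun u hu x ha1 ha2 ha3 => le_csSup (hbdd u) ⟨x, ⟨ha1, le_min ha2 ha3⟩, rfl⟩
  have hS0 : ∀ u, 0 ≤ u → 0 ≤ S u :=
    fun u hu => le_trans (hfnn 0 ⟨le_rfl, hT.le⟩) (hSle u hu 0 le_rfl hu hT.le)
  -- pointwise estimate for small times
  have hsmall : ∀ u, 0 ≤ u → u ≤ T → ∀ x, 0 ≤ x → x ≤ u → x ≤ 2*δ →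
      f x ≤ a + (1/2) * S u := by
    intro u hu huT x hx0 hxu hx2δ
    rcases eq_or_lt_of_le hx0 with heq | hx
    · have h0' := hineq 0 ⟨le_rfl, hT.le⟩
      rw [intervalIntegral.integral_same, mul_zero, add_zero] at h0'
      rw [← heq]
      have := hS0 u hu; linarith
    · have hxT : x ≤ T := le_trans hxu huT
      obtain ⟨hKi, hKb⟩ := gvts_K_full βt βh h1 h2 hx
      obtain ⟨hFi, hFb⟩ := gvts_F_bound βt βh f hfmeas le_rfl hx.le le_rfl (hS0 u hu) hKi
        (fun s hs => ⟨hfnn s ⟨hs.1.le, le_trans hs.2.le hxT⟩,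
          hSle u hu s hs.1.le (le_trans hs.2.le hxu) (le_trans hs.2.le hxT)⟩)
      have key := hineq x ⟨hx.le, hxT⟩
      have hb0 : (0:ℝ) ≤ b * x ^ βc := by positivity
      have hchain : b * x ^ βc * (∫ s in (0:ℝ)..x, f s / (s ^ βt * (x - s) ^ βh))
          ≤ (1/2) * S u := by
        calc b * x ^ βc * (∫ s in (0:ℝ)..x, f s / (s ^ βt * (x - s) ^ βh))
            ≤ b * x ^ βc * (S u * (c3 * x ^ (1 - βt - βh))) := by
              apply mul_le_mul_of_nonneg_left _ hb0
              refine hFb.trans ?_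
              rw [hc3]
              exact mul_le_mul_of_nonneg_left hKb (hS0 u hu)
          _ = (b * c3) * (x ^ βc * x ^ (1 - βt - βh)) * S u := by ring
          _ = (b * c3) * x ^ γ * S u := by
              rw [← Real.rpow_add hx, show βc + (1 - βt - βh) = γ from by rw [hγ]; ring]
          _ ≤ (1/2) * S u := by
              apply mul_le_mul_of_nonneg_right _ (hS0 u hu)
              have hx2 : x ^ γ ≤ (2*δ) ^ γ := Real.rpow_le_rpow hx.le hx2δ hγ0.le
              have hh := hδ1 (2*δ) (by linarith) hδa
              calc (b*c3) * x ^ γ ≤ (b*c3) * (2*δ)^γ :=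
                    mul_le_mul_of_nonneg_left hx2 (mul_pos hb hc30).le
                _ ≤ 1/2 := hh
      linarith
  -- pointwise estimate for large times
  have hlarge : ∀ u, 0 ≤ u → u ≤ T → ∀ x, x ≤ u → 2*δ < x →
      f x ≤ a + A * S (max (u - δ) 0) + (1/2) * S u := by
    intro u hu huT x hxu hx2δ
    have hx : 0 < x := lt_trans (by linarith) hx2δ
    have hxT : x ≤ T := le_trans hxu huT
    have hu'0 : (0:ℝ) ≤ max (u - δ) 0 := le_max_right _ _
    have hu'T : max (u - δ) 0 ≤ T := max_le (by linarith) hT.le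
    have hxδ0 : 0 < x - δ := by linarith
    have hxδhalf : x/2 ≤ x - δ := by linarith
    obtain ⟨hKi, hKb⟩ := gvts_K_full βt βh h1 h2 hx
    have hK1 : IntervalIntegrable (fun s => s ^ (-βt) * (x - s) ^ (-βh)) volume 0 (x-δ) := by
      apply hKi.mono_set
      rw [Set.uIcc_of_le (by linarith : (0:ℝ) ≤ x - δ), Set.uIcc_of_le (by linarith : (0:ℝ) ≤ x)]
      exact Set.Icc_subset_Icc le_rfl (by linarith)
    obtain ⟨hK2, hK2b⟩ := gvts_K_tail βt βh h1 h2 hx hδ0 hxδhalf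
    obtain ⟨hF1, hF1b⟩ := gvts_F_bound βt βh f hfmeas le_rfl (by linarith : (0:ℝ) ≤ x - δ)
      (by linarith : x - δ ≤ x) (hS0 _ hu'0) hK1
      (fun s hs => ⟨hfnn s ⟨hs.1.le, by linarith [hs.2]⟩,
        hSle _ hu'0 s hs.1.le (le_trans (by linarith [hs.2] : s ≤ u - δ) (le_max_left _ _))
          (by linarith [hs.2])⟩)
    obtain ⟨hF2, hF2b⟩ := gvts_F_bound βt βh f hfmeas (by linarith : (0:ℝ) ≤ x - δ)
      (by linarith : x - δ ≤ x) le_rfl (hS0 u hu) hK2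
      (fun s hs => ⟨hfnn s ⟨by linarith [hs.1], le_trans hs.2.le hxT⟩,
        hSle u hu s (by linarith [hs.1]) (le_trans hs.2.le hxu) (le_trans hs.2.le hxT)⟩)
    have key := hineq x ⟨hx.le, hxT⟩
    have hsplit : (∫ s in (0:ℝ)..x, f s / (s ^ βt * (x - s) ^ βh)) =
        (∫ s in (0:ℝ)..(x-δ), f s / (s ^ βt * (x - s) ^ βh)) +
        (∫ s in (x-δ)..x, f s / (s ^ βt * (x - s) ^ βh)) :=
      (intervalIntegral.integral_add_adjacent_intervals hF1 hF2).symm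
    have hK1le : (∫ s in (0:ℝ)..(x-δ), s ^ (-βt) * (x - s) ^ (-βh)) ≤
        (∫ s in (0:ℝ)..x, s ^ (-βt) * (x - s) ^ (-βh)) := by
      rw [← intervalIntegral.integral_add_adjacent_intervals hK1 hK2]
      have hnn : (0:ℝ) ≤ ∫ s in (x-δ)..x, s ^ (-βt) * (x - s) ^ (-βh) := by
        apply intervalIntegral.integral_nonneg (by linarith : x - δ ≤ x)
        intro s hs
        exact mul_nonneg (Real.rpow_nonneg (by linarith [hs.1] : (0:ℝ) ≤ s) _)
          (Real.rpow_nonneg (by linarith [hs.2] : (0:ℝ) ≤ x - s) _)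
      linarith
    have hxbc : (0:ℝ) ≤ b * x ^ βc := by positivity
    have hhead : b * x ^ βc * (∫ s in (0:ℝ)..(x-δ), f s / (s ^ βt * (x - s) ^ βh)) ≤
        A * S (max (u - δ) 0) := by
      calc b * x ^ βc * (∫ s in (0:ℝ)..(x-δ), f s / (s ^ βt * (x - s) ^ βh))
          ≤ b * x ^ βc * (S (max (u - δ) 0) * (c3 * x ^ (1-βt-βh))) := by
            apply mul_le_mul_of_nonneg_left _ hxbc
            refine hF1b.trans ?_
            rw [hc3]
            exact mul_le_mul_of_nonneg_left (hK1le.trans hKb) (hS0 _ hu'0)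
        _ = (b * c3) * (x ^ βc * x ^ (1-βt-βh)) * S (max (u - δ) 0) := by ring
        _ = (b * c3) * x ^ γ * S (max (u - δ) 0) := by
            rw [← Real.rpow_add hx, show βc + (1 - βt - βh) = γ from by rw [hγ]; ring]
        _ ≤ (b * c3) * T ^ γ * S (max (u - δ) 0) := by
            apply mul_le_mul_of_nonneg_right _ (hS0 _ hu'0)
            exact mul_le_mul_of_nonneg_left
              (Real.rpow_le_rpow hx.le hxT hγ0.le) (mul_pos hb hc30).le
        _ = A * S (max (u - δ) 0) := by rw [hA]
    have htail : b * x ^ βc * (∫ s in (x-δ)..x, f s / (s ^ βt * (x - s) ^ βh)) ≤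
        (1/2) * S u := by
      have step1 : (∫ s in (x-δ)..x, f s / (s ^ βt * (x - s) ^ βh)) ≤
          S u * (c1 * x ^ (-βt) * (δ ^ (-βh+1)/(-βh+1))) := by
        refine hF2b.trans ?_
        rw [hc1]
        exact mul_le_mul_of_nonneg_left hK2b (hS0 u hu)
      have hcoeff : (0:ℝ) ≤ b * c1 * δ ^ (-βh+1) / (-βh+1) := by
        apply div_nonneg _ (by linarith)
        exact mul_nonneg (mul_nonneg hb.le hc10.le) (Real.rpow_nonneg hδ0.le _)
      calc b * x ^ βc * (∫ s in (x-δ)..x, f s / (s ^ βt * (x - s) ^ βh))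
          ≤ b * x ^ βc * (S u * (c1 * x ^ (-βt) * (δ ^ (-βh+1)/(-βh+1)))) :=
            mul_le_mul_of_nonneg_left step1 hxbc
        _ = (b * c1 * δ ^ (-βh+1) / (-βh+1)) * (x ^ βc * x ^ (-βt)) * S u := by ring
        _ = (b * c1 * δ ^ (-βh+1) / (-βh+1)) * x ^ (βc - βt) * S u := by
            rw [← Real.rpow_add hx, show βc + -βt = βc - βt from by ring]
        _ ≤ (1/2) * S u := by
            apply mul_le_mul_of_nonneg_right _ (hS0 u hu)
            rcases le_or_gt 0 (βc - βt) with he | he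
            · have hxe : x ^ (βc - βt) ≤ T ^ (βc - βt) := Real.rpow_le_rpow hx.le hxT he
              have hh := hδ2 δ hδ0 hδb
              calc (b * c1 * δ ^ (-βh+1) / (-βh+1)) * x ^ (βc - βt)
                  ≤ (b * c1 * δ ^ (-βh+1) / (-βh+1)) * T ^ (βc - βt) :=
                    mul_le_mul_of_nonneg_left hxe hcoeff
                _ = b * c1 * T ^ (βc - βt) / (1 - βh) * δ ^ (1-βh) := by
                    rw [show (1:ℝ)-βh = -βh+1 from by ring]; ring
                _ ≤ 1/2 := hh
            · have hxe : x ^ (βc - βt) ≤ (2*δ) ^ (βc - βt) :=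
                Real.rpow_le_rpow_of_nonpos (by linarith) hx2δ.le he.le
              have hh := hδ3 δ hδ0 hδc
              have hsplit2 : ((2*δ):ℝ) ^ (βc-βt) = 2 ^ (βc-βt) * δ ^ (βc-βt) :=
                Real.mul_rpow (by norm_num) hδ0.le
              calc (b * c1 * δ ^ (-βh+1) / (-βh+1)) * x ^ (βc - βt)
                  ≤ (b * c1 * δ ^ (-βh+1) / (-βh+1)) * (2*δ) ^ (βc - βt) :=
                    mul_le_mul_of_nonneg_left hxe hcoeff
                _ = b * c1 * 2 ^ (βc-βt) / (1-βh) * (δ ^ (-βh+1) * δ ^ (βc-βt)) := by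
                    rw [hsplit2, show (1:ℝ)-βh = -βh+1 from by ring]; ring
                _ = b * c1 * 2 ^ (βc-βt) / (1-βh) * δ ^ γ := by
                    rw [← Real.rpow_add hδ0, show -βh+1+(βc-βt) = γ from by rw [hγ]; ring]
                _ ≤ 1/2 := hh
    rw [hsplit, mul_add] at key
    linarith
  -- absorption
  have habs : ∀ u, 0 ≤ u → u ≤ T → S u ≤ 2*a + 2*A * S (max (u - δ) 0) := by
    intro u hu huT
    have hub : S u ≤ a + A * S (max (u - δ) 0) + (1/2) * S u := by
      apply csSup_le (hne u hu)
      rintro y ⟨x, ⟨hx0, hxm⟩, rfl⟩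
      have hxu : x ≤ u := le_trans hxm (min_le_left _ _)
      rcases le_or_gt x (2*δ) with hc | hc
      · have := hsmall u hu huT x hx0 hxu hc
        have hAS : 0 ≤ A * S (max (u - δ) 0) := mul_nonneg hA0 (hS0 _ (le_max_right _ _))
        linarith
      · exact hlarge u hu huT x hxu hc
    linarith
  -- induction
  have hind : ∀ k : ℕ, ∀ u, 0 ≤ u → u ≤ T → u ≤ ((k:ℝ)+2)*δ → S u ≤ g k := by
    intro k
    induction k with
    | zero =>
      intro u hu huT hu2
      have hub : S u ≤ a + (1/2) * S u := by
        apply csSup_le (hne u hu)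
        rintro y ⟨x, ⟨hx0, hxm⟩, rfl⟩
        refine hsmall u hu huT x hx0 (le_trans hxm (min_le_left _ _)) ?_
        have := le_trans hxm (min_le_left _ _)
        push_cast at hu2
        linarith
      rw [hg0]
      linarith
    | succ k ih =>
      intro u hu huT huk
      have h := habs u hu huT
      have hu' : S (max (u - δ) 0) ≤ g k := by
        apply ih (max (u - δ) 0) (le_max_right _ _) (max_le (by linarith) hT.le)
        apply max_le _ (by positivity)
        push_cast at huk ⊢
        linarith
      rw [hgs]
      have := mul_le_mul_of_nonneg_left hu' (by linarith : (0:ℝ) ≤ 2*A)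
      linarith
  -- conclude
  intro t ht
  have hfT : f t ≤ S T := hSle T hT.le t ht.1 ht.2 ht.2
  have hTn : S T ≤ g n := by
    apply hind n T hT.le le_rfl
    rw [div_le_iff₀ hδ0] at hn
    nlinarith [hδ0.le]
  linarith
end

section
/- Quantitative short-time two-singularity Gronwall bound: under the hypotheses f(t) ≤ a + b t^{β̌} ∫_0^t f(s) s^{-β̃} (t−s)^{-β̂} ds with β̃, β̂ < 1, β̌ > β̃ + β̂ − 1 and a, b > 0, for every t with t < (b B(1 − β̃, 1 − β̂))^{-1/(β̌ + 1 − β̃ − β̂)} one has sup_{s∈[0,t]} f(s) ≤ a / (1 − b B(1 − β̃, 1 − β̂) t^{β̌ + 1 − β̃ − β̂}). -/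
open MeasureTheory

/-- The Beta function `B(x,y) = ∫_0^1 u^(x-1) (1-u)^(y-1) du`. -/
noncomputable def betaFn (x y : ℝ) : ℝ :=
  ∫ u in (0 : ℝ)..1, u ^ (x - 1) * (1 - u) ^ (y - 1)

private lemma kernel_meas (βt βh s : ℝ) :
    Measurable (fun u : ℝ => u ^ (-βt) * (s - u) ^ (-βh)) := by fun_prop

/-- Integrability of the two-singularity kernel. -/
private lemma kernel_integrable {βt βh : ℝ} (h1 : βt < 1) (h2 : βh < 1) {s : ℝ} (hs : 0 < s) :
    IntervalIntegrable (fun u : ℝ => u ^ (-βt) * (s - u) ^ (-βh)) volume 0 s := by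
  have hbt : (-1 : ℝ) < -βt := by linarith
  have hbh : (-1 : ℝ) < -βh := by linarith
  have h2s : 0 < s / 2 := by linarith
  have part1 : IntervalIntegrable (fun u : ℝ => u ^ (-βt) * (s - u) ^ (-βh)) volume 0 (s / 2) := by
    set C : ℝ := max ((s / 2) ^ (-βh)) (s ^ (-βh)) with hC
    have hint : IntervalIntegrable (fun u : ℝ => u ^ (-βt) * C) volume 0 (s / 2) :=
      (intervalIntegral.intervalIntegrable_rpow' hbt).mul_const C
    refine hint.mono_fun ((kernel_meas βt βh s).aestronglyMeasurable) ?_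
    have hIoc : Set.uIoc (0 : ℝ) (s / 2) = Set.Ioc 0 (s / 2) := Set.uIoc_of_le h2s.le
    rw [hIoc]
    filter_upwards [ae_restrict_mem measurableSet_Ioc] with u hu
    obtain ⟨hu0, hus⟩ := hu
    have hsu : 0 < s - u := by linarith
    have hbound : (s - u) ^ (-βh) ≤ C := by
      rcases le_or_gt 0 (-βh) with h | h
      · exact le_max_of_le_right (Real.rpow_le_rpow hsu.le (by linarith) h)
      · exact le_max_of_le_left (Real.rpow_le_rpow_of_nonpos h2s (by linarith) h.le)
    have h1' : 0 ≤ u ^ (-βt) := Real.rpow_nonneg hu0.le _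
    have h2' : 0 ≤ (s - u) ^ (-βh) := Real.rpow_nonneg hsu.le _
    have hC0 : 0 ≤ C := le_max_of_le_right (Real.rpow_nonneg hs.le _)
    rw [Real.norm_eq_abs, Real.norm_eq_abs, abs_of_nonneg (mul_nonneg h1' h2'),
      abs_of_nonneg (mul_nonneg h1' hC0)]
    exact mul_le_mul_of_nonneg_left hbound h1'
  have part2 : IntervalIntegrable (fun u : ℝ => u ^ (-βt) * (s - u) ^ (-βh)) volume (s / 2) s := by
    set C : ℝ := max ((s / 2) ^ (-βt)) (s ^ (-βt)) with hC
    have hbase : IntervalIntegrable (fun u : ℝ => (s - u) ^ (-βh)) volume (s / 2) s := by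
      have := (intervalIntegral.intervalIntegrable_rpow' hbh (a := 0) (b := s / 2)).comp_sub_left s
      simpa [show s - s / 2 = s / 2 by ring] using this.symm
    have hint : IntervalIntegrable (fun u : ℝ => C * (s - u) ^ (-βh)) volume (s / 2) s :=
      hbase.const_mul C
    refine hint.mono_fun ((kernel_meas βt βh s).aestronglyMeasurable) ?_
    have hIoc : Set.uIoc (s / 2) s = Set.Ioc (s / 2) s := Set.uIoc_of_le (by linarith)
    rw [hIoc]
    filter_upwards [ae_restrict_mem measurableSet_Ioc] with u hu
    obtain ⟨hu0, hus⟩ := hu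
    have hu0' : 0 < u := lt_trans h2s hu0
    have hsu : 0 ≤ s - u := by linarith
    have hbound : u ^ (-βt) ≤ C := by
      rcases le_or_gt 0 (-βt) with h | h
      · exact le_max_of_le_right (Real.rpow_le_rpow hu0'.le hus h)
      · exact le_max_of_le_left (Real.rpow_le_rpow_of_nonpos h2s hu0.le h.le)
    have h1' : 0 ≤ u ^ (-βt) := Real.rpow_nonneg hu0'.le _
    have h2' : 0 ≤ (s - u) ^ (-βh) := Real.rpow_nonneg hsu _
    have hC0 : 0 ≤ C := le_max_of_le_right (Real.rpow_nonneg hs.le _)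
    rw [Real.norm_eq_abs, Real.norm_eq_abs, abs_of_nonneg (mul_nonneg h1' h2'),
      abs_of_nonneg (mul_nonneg hC0 h2')]
    exact mul_le_mul_of_nonneg_right hbound h2'
  exact part1.trans part2

/-- Value of the kernel integral via the Beta function. -/
private lemma kernel_integral_eq (βt βh : ℝ) {s : ℝ} (hs : 0 < s) :
    (∫ u in (0 : ℝ)..s, u ^ (-βt) * (s - u) ^ (-βh))
      = s ^ (1 - βt - βh) * betaFn (1 - βt) (1 - βh) := by
  have hB : betaFn (1 - βt) (1 - βh) = ∫ u in (0 : ℝ)..1, u ^ (-βt) * (1 - u) ^ (-βh) := by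
    unfold betaFn
    norm_num
  have hsub := intervalIntegral.integral_comp_mul_left (a := (0 : ℝ)) (b := 1)
    (fun u : ℝ => u ^ (-βt) * (s - u) ^ (-βh)) hs.ne'
  have hcongr : (∫ x in (0 : ℝ)..1, (s * x) ^ (-βt) * (s - s * x) ^ (-βh))
      = ∫ x in (0 : ℝ)..1, s ^ (-βt) * s ^ (-βh) * (x ^ (-βt) * (1 - x) ^ (-βh)) := by
    refine intervalIntegral.integral_congr fun x hx => ?_
    rw [Set.uIcc_of_le zero_le_one] at hx
    obtain ⟨hx0, hx1⟩ := hx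
    have e1 : (s * x) ^ (-βt) = s ^ (-βt) * x ^ (-βt) := Real.mul_rpow hs.le hx0
    have e2 : (s - s * x) ^ (-βh) = s ^ (-βh) * (1 - x) ^ (-βh) := by
      rw [show s - s * x = s * (1 - x) by ring]
      exact Real.mul_rpow hs.le (by linarith)
    rw [e1, e2]; ring
  rw [hcongr, intervalIntegral.integral_const_mul, ← hB, mul_zero, mul_one] at hsub
  have := congrArg (fun x => s * x) hsub
  simp only [smul_eq_mul, ← mul_assoc, mul_inv_cancel₀ hs.ne', one_mul] at this
  rw [← this]
  rw [show (1 : ℝ) - βt - βh = 1 + -βt + -βh by ring, Real.rpow_add hs, Real.rpow_add hs,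
    Real.rpow_one]

private lemma betaFn_pos {βt βh : ℝ} (h1 : βt < 1) (h2 : βh < 1) :
    0 < betaFn (1 - βt) (1 - βh) := by
  have hB : betaFn (1 - βt) (1 - βh) = ∫ u in (0 : ℝ)..1, u ^ (-βt) * (1 - u) ^ (-βh) := by
    unfold betaFn; norm_num
  rw [hB]
  have hint : IntervalIntegrable (fun u : ℝ => u ^ (-βt) * (1 - u) ^ (-βh)) volume 0 1 := by
    simpa using kernel_integrable h1 h2 (s := 1) one_pos
  refine intervalIntegral.intervalIntegral_pos_of_pos_on hint (fun x hx => ?_) one_pos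
  exact mul_pos (Real.rpow_pos_of_pos hx.1 _) (Real.rpow_pos_of_pos (by linarith [hx.2]) _)

theorem gronwall_two_singularities_short_time (βt βh βc a b T : ℝ)
    (h1 : βt < 1) (h2 : βh < 1) (h3 : βc > βt + βh - 1)
    (ha : 0 < a) (hb : 0 < b) (hT : 0 < T)
    (f : ℝ → ℝ) (hfm : Measurable f)
    (hf0 : ∀ t ∈ Set.Icc (0 : ℝ) T, 0 ≤ f t)
    (hfb : ∃ M : ℝ, ∀ t ∈ Set.Icc (0 : ℝ) T, f t ≤ M)
    (hint : ∀ t ∈ Set.Icc (0 : ℝ) T,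
      f t ≤ a + b * t ^ βc * ∫ s in (0 : ℝ)..t, f s / (s ^ βt * (t - s) ^ βh))
    (t : ℝ) (ht : t ∈ Set.Icc (0 : ℝ) T)
    (htsmall : t < (b * betaFn (1 - βt) (1 - βh)) ^ (-(1 : ℝ) / (βc + 1 - βt - βh))) :
    ∀ s ∈ Set.Icc (0 : ℝ) t,
      f s ≤ a / (1 - b * betaFn (1 - βt) (1 - βh) * t ^ (βc + 1 - βt - βh)) := by
  obtain ⟨ht0, htT⟩ := ht
  set B : ℝ := betaFn (1 - βt) (1 - βh) with hBdef
  have hB : 0 < B := betaFn_pos h1 h2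
  set γ : ℝ := βc + 1 - βt - βh with hγdef
  have hγ : 0 < γ := by simp only [hγdef]; linarith
  set c : ℝ := b * B * t ^ γ with hcdef
  have hc0 : 0 ≤ c := by
    have := Real.rpow_nonneg ht0 γ
    positivity
  have hbB : 0 < b * B := mul_pos hb hB
  have hc1 : c < 1 := by
    rcases eq_or_lt_of_le ht0 with h | h
    · rw [hcdef, ← h, Real.zero_rpow hγ.ne', mul_zero]; norm_num
    · have htγ : t ^ γ < (b * B) ^ (-(1 : ℝ) / γ * γ) := by
        rw [Real.rpow_mul hbB.le]
        exact Real.rpow_lt_rpow ht0 htsmall hγ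
      rw [show -(1 : ℝ) / γ * γ = -1 by field_simp, Real.rpow_neg_one] at htγ
      calc c = b * B * t ^ γ := rfl
        _ < b * B * (b * B)⁻¹ := by exact mul_lt_mul_of_pos_left htγ hbB
        _ = 1 := mul_inv_cancel₀ hbB.ne'
  obtain ⟨M, hM⟩ := hfb
  have hM0 : 0 ≤ M := le_trans (hf0 0 ⟨le_refl _, hT.le⟩) (hM 0 ⟨le_refl _, hT.le⟩)
  -- key iteration step
  have key : ∀ X : ℝ, 0 ≤ X → (∀ u ∈ Set.Icc (0 : ℝ) t, f u ≤ X) →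
      ∀ s ∈ Set.Icc (0 : ℝ) t, f s ≤ a + c * X := by
    intro X hX0 hX s ⟨hs0, hst⟩
    have hsT : s ∈ Set.Icc (0 : ℝ) T := ⟨hs0, hst.trans htT⟩
    rcases eq_or_lt_of_le hs0 with h | hs
    · have := hint s hsT
      rw [← h] at this ⊢
      simp only [intervalIntegral.integral_same, mul_zero, add_zero] at this
      have : f 0 ≤ a := this
      nlinarith [mul_nonneg hc0 hX0]
    · have hker := kernel_integrable h1 h2 (βt := βt) (βh := βh) hs
      -- pointwise bound
      have hpt : ∀ u ∈ Set.Icc (0 : ℝ) s,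
          f u / (u ^ βt * (s - u) ^ βh) ≤ X * (u ^ (-βt) * (s - u) ^ (-βh)) := by
        intro u ⟨hu0, hus⟩
        have hfu0 : 0 ≤ f u := hf0 u ⟨hu0, le_trans hus (hst.trans htT)⟩
        have hfuX : f u ≤ X := hX u ⟨hu0, hus.trans hst⟩
        have hsu : 0 ≤ s - u := by linarith
        have hD : 0 ≤ u ^ βt * (s - u) ^ βh :=
          mul_nonneg (Real.rpow_nonneg hu0 _) (Real.rpow_nonneg hsu _)
        rcases eq_or_lt_of_le hD with hD0 | hD0
        · rw [← hD0, div_zero]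
          exact mul_nonneg hX0 (mul_nonneg (Real.rpow_nonneg hu0 _) (Real.rpow_nonneg hsu _))
        · have : u ^ (-βt) * (s - u) ^ (-βh) = (u ^ βt * (s - u) ^ βh)⁻¹ := by
            rw [Real.rpow_neg hu0, Real.rpow_neg hsu, mul_inv]
          rw [this]
          rw [div_eq_mul_inv]
          exact mul_le_mul_of_nonneg_right hfuX (inv_nonneg.mpr hD)
      -- integrability of the lhs
      have hlhs : IntervalIntegrable (fun u => f u / (u ^ βt * (s - u) ^ βh)) volume 0 s := by
        refine (hker.const_mul X).mono_fun ?_ ?_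
        · have : Measurable (fun u => f u / (u ^ βt * (s - u) ^ βh)) := by fun_prop
          exact this.aestronglyMeasurable
        · rw [Set.uIoc_of_le hs0]
          filter_upwards [ae_restrict_mem measurableSet_Ioc] with u hu
          have hu' : u ∈ Set.Icc (0 : ℝ) s := ⟨hu.1.le, hu.2⟩
          have hfu0 : 0 ≤ f u := hf0 u ⟨hu'.1, le_trans hu'.2 (hst.trans htT)⟩
          have hsu : 0 ≤ s - u := by linarith [hu'.2]
          have hnn : 0 ≤ f u / (u ^ βt * (s - u) ^ βh) :=
            div_nonneg hfu0 (mul_nonneg (Real.rpow_nonneg hu'.1 _) (Real.rpow_nonneg hsu _))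
          have hnn2 : 0 ≤ X * (u ^ (-βt) * (s - u) ^ (-βh)) :=
            mul_nonneg hX0 (mul_nonneg (Real.rpow_nonneg hu'.1 _) (Real.rpow_nonneg hsu _))
          rw [Real.norm_eq_abs, Real.norm_eq_abs, abs_of_nonneg hnn, abs_of_nonneg hnn2]
          exact hpt u hu'
      have hmono : (∫ u in (0 : ℝ)..s, f u / (u ^ βt * (s - u) ^ βh))
          ≤ ∫ u in (0 : ℝ)..s, X * (u ^ (-βt) * (s - u) ^ (-βh)) :=
        intervalIntegral.integral_mono_on hs0 hlhs (hker.const_mul X) hpt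
      have hval : (∫ u in (0 : ℝ)..s, X * (u ^ (-βt) * (s - u) ^ (-βh)))
          = X * (s ^ (1 - βt - βh) * B) := by
        rw [intervalIntegral.integral_const_mul, kernel_integral_eq βt βh hs]
      calc f s ≤ a + b * s ^ βc * ∫ u in (0 : ℝ)..s, f u / (u ^ βt * (s - u) ^ βh) :=
            hint s hsT
        _ ≤ a + b * s ^ βc * (X * (s ^ (1 - βt - βh) * B)) := by
            rw [← hval]
            exact add_le_add_right (mul_le_mul_of_nonneg_left hmono
              (mul_nonneg hb.le (Real.rpow_nonneg hs0 _))) a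
        _ = a + b * B * X * s ^ γ := by
            rw [hγdef, show βc + 1 - βt - βh = βc + (1 - βt - βh) by ring,
              Real.rpow_add hs]
            ring
        _ ≤ a + b * B * X * t ^ γ := by
            have : s ^ γ ≤ t ^ γ := Real.rpow_le_rpow hs0 hst hγ.le
            nlinarith [mul_nonneg (mul_nonneg hb.le hB.le) hX0]
        _ = a + c * X := by rw [hcdef]; ring
  -- iterate
  set D : ℝ := a / (1 - c) with hDdef
  have h1c : 0 < 1 - c := by linarith
  have hD0 : 0 ≤ D := div_nonneg ha.le h1c.le
  have iter : ∀ n : ℕ, ∀ s ∈ Set.Icc (0 : ℝ) t, f s ≤ D + c ^ n * M := by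
    intro n
    induction n with
    | zero =>
      intro s hs
      have : f s ≤ M := hM s ⟨hs.1, hs.2.trans htT⟩
      simpa using le_trans this (by linarith)
    | succ n ih =>
      intro s hs
      have hX0 : 0 ≤ D + c ^ n * M := by positivity
      have := key (D + c ^ n * M) hX0 ih s hs
      have hacD : a + c * D = D := by
        rw [hDdef]; field_simp; ring
      calc f s ≤ a + c * (D + c ^ n * M) := this
        _ = (a + c * D) + c ^ (n + 1) * M := by ring
        _ = D + c ^ (n + 1) * M := by rw [hacD]
  intro s hs
  have hlim : Filter.Tendsto (fun n : ℕ => D + c ^ n * M) Filter.atTop (nhds D) := by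
    have : Filter.Tendsto (fun n : ℕ => c ^ n) Filter.atTop (nhds 0) :=
      tendsto_pow_atTop_nhds_zero_of_lt_one hc0 hc1
    have := ((this.mul_const M).const_add D)
    simpa using this
  have hle : f s ≤ D := ge_of_tendsto' hlim (fun n => iter n s hs)
  simpa [hDdef, hcdef, hγdef, hBdef] using hle
end

section
/- One-step Euler transition density bound: let b_h : [0,T] × R^d → R^d be measurable with ‖b_h‖_∞ ≤ B h^{-(1/q + d/(2ρ))} where d/ρ + 2/q < 1 and set α = 1 − d/ρ − 2/q. Fix c > 1, h > 0, t_k = kh, x ∈ R^d and t ∈ (t_k, t_k + h]. Then the function Γ^h(t_k, x, t, y) := (1/h) ∫_0^h g_1(t − t_k, y − x − (t − t_k) b_h(t_k + s, x)) ds satisfies Γ^h(t_k, x, t, y) ≤ c^{d/2} e^{B² h^α /(2(c−1))} g_c(t − t_k, y − x) for all y ∈ R^d. -/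
open MeasureTheory
open scoped Real

set_option maxHeartbeats 1000000 in
theorem one_step_euler_density_bound (d : ℕ) (q ρ c h B : ℝ)
    (hq : 0 < q) (hρ : 0 < ρ) (hcond : (d : ℝ) / ρ + 2 / q < 1)
    (hc : 1 < c) (hh : 0 < h) (hB : 0 < B)
    (bh : ℝ → EuclideanSpace ℝ (Fin d) → EuclideanSpace ℝ (Fin d))
    (hbmeas : Measurable (Function.uncurry bh))
    (hbbound : ∀ s z, ‖bh s z‖ ≤ B * h ^ (-(1 / q + (d : ℝ) / (2 * ρ))))
    (k : ℕ) (t : ℝ) (ht1 : (k : ℝ) * h < t) (ht2 : t ≤ (k : ℝ) * h + h)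
    (x y : EuclideanSpace ℝ (Fin d)) :
    (1 / h) * ∫ s in (0 : ℝ)..h,
        gauss d 1 (t - (k : ℝ) * h) (y - x - (t - (k : ℝ) * h) • bh ((k : ℝ) * h + s) x) ≤
      c ^ ((d : ℝ) / 2) *
        Real.exp (B ^ 2 * h ^ (1 - (d : ℝ) / ρ - 2 / q) / (2 * (c - 1))) *
        gauss d c (t - (k : ℝ) * h) (y - x) := by
  have hπ := Real.pi_pos
  set u := t - (k : ℝ) * h with hu_def
  have hu : 0 < u := by simp only [hu_def]; linarith
  have hu2 : u ≤ h := by simp only [hu_def]; linarith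
  set β : ℝ := 1 / q + (d : ℝ) / (2 * ρ) with hβ
  set E : ℝ := B ^ 2 * h ^ (1 - (d : ℝ) / ρ - 2 / q) / (2 * (c - 1)) with hE
  set C : ℝ := c ^ ((d : ℝ) / 2) * Real.exp E * gauss d c u (y - x) with hC
  have hc0 : (0:ℝ) < c := by linarith
  have hP : (0:ℝ) ≤ h ^ (-β) := Real.rpow_nonneg hh.le _
  -- algebraic identity for the exponent
  have hAlg : h ^ (1 - (d : ℝ) / ρ - 2 / q) = h * (h ^ (-β)) ^ 2 := by
    have e1 : 1 - (d : ℝ) / ρ - 2 / q = 1 + (-β) * 2 := by rw [hβ]; field_simp; ring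
    rw [e1, Real.rpow_add hh, Real.rpow_one, Real.rpow_mul hh.le,
      Real.rpow_two]
  -- pointwise bound
  have claim : ∀ s : ℝ,
      gauss d 1 u (y - x - u • bh ((k : ℝ) * h + s) x) ≤ C := by
    intro s
    set b := bh ((k : ℝ) * h + s) x with hb
    set n := ‖y - x - u • b‖ with hn
    set m := ‖y - x‖ with hm
    set w := ‖u • b‖ with hwdef
    have hn0 : 0 ≤ n := norm_nonneg _
    have hm0 : 0 ≤ m := norm_nonneg _
    have hw0 : 0 ≤ w := norm_nonneg _
    have hmw : m ≤ n + w := by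
      have := norm_add_le (y - x - u • b) (u • b)
      simpa [hn, hm, hwdef] using this
    have hwle : w ≤ u * (B * h ^ (-β)) := by
      have : w = u * ‖b‖ := by
        rw [hwdef, norm_smul, Real.norm_eq_abs, abs_of_pos hu]
      rw [this]
      exact mul_le_mul_of_nonneg_left (hbbound _ _) hu.le
    have hw2 : w ^ 2 ≤ u ^ 2 * B ^ 2 * (h ^ (-β)) ^ 2 := by
      have := pow_le_pow_left₀ hw0 hwle 2
      calc w ^ 2 ≤ (u * (B * h ^ (-β))) ^ 2 := this
        _ = u ^ 2 * B ^ 2 * (h ^ (-β)) ^ 2 := by ring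
    -- key quadratic inequality (division-free)
    have key : m ^ 2 * (c - 1) ≤ c * n ^ 2 * (c - 1) + c * w ^ 2 := by
      have hm2 : m ^ 2 ≤ (n + w) ^ 2 := by nlinarith
      nlinarith [sq_nonneg ((c - 1) * n - w)]
    -- division form
    have hc1 : (0:ℝ) < c - 1 := by linarith
    have hd1 : (0:ℝ) < 2 * c * u := by positivity
    have hd2 : (0:ℝ) < 2 * u := by positivity
    have hd3 : (0:ℝ) < 2 * u * (c - 1) := mul_pos hd2 hc1
    have hd4 : (0:ℝ) < 2 * (c - 1) := by linarith
    have hdiv : m ^ 2 / (2 * c * u) - n ^ 2 / (2 * u) ≤ w ^ 2 / (2 * u * (c - 1)) := by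
      rw [div_sub_div _ _ (ne_of_gt hd1) (ne_of_gt hd2),
        div_le_div_iff₀ (mul_pos hd1 hd2) hd3]
      nlinarith [mul_le_mul_of_nonneg_right key (by positivity : (0:ℝ) ≤ 4 * u ^ 2)]
    have hEbound : w ^ 2 / (2 * u * (c - 1)) ≤ E := by
      rw [hE, hAlg, div_le_div_iff₀ hd3 hd4]
      nlinarith [mul_nonneg (mul_nonneg (sq_nonneg B) (sq_nonneg (h ^ (-β))))
          (mul_nonneg (mul_nonneg (sub_nonneg.mpr hu2) hu.le) (by linarith : (0:ℝ) ≤ c - 1)),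
        hw2, mul_le_mul_of_nonneg_right hw2 (by linarith : (0:ℝ) ≤ 2 * (c - 1))]
    have hexp : -n ^ 2 / (2 * 1 * u) ≤ E + -m ^ 2 / (2 * c * u) := by
      have : (2 : ℝ) * 1 * u = 2 * u := by ring
      rw [this]
      have h1 : -n ^ 2 / (2 * u) = -(n ^ 2 / (2 * u)) := by ring
      have h2 : -m ^ 2 / (2 * c * u) = -(m ^ 2 / (2 * c * u)) := by ring
      rw [h1, h2]; linarith
    -- prefactor
    have hfac : c ^ ((d : ℝ) / 2) * (2 * Real.pi * c * u) ^ (-(d : ℝ) / 2)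
        = (2 * Real.pi * 1 * u) ^ (-(d : ℝ) / 2) := by
      have e1 : 2 * Real.pi * c * u = (2 * Real.pi * 1 * u) * c := by ring
      rw [e1, Real.mul_rpow (by positivity) (by positivity),
        ← mul_assoc, mul_comm (c ^ ((d:ℝ)/2)) _, mul_assoc,
        ← Real.rpow_add hc0, show (d:ℝ)/2 + -(d:ℝ)/2 = 0 from by ring,
        Real.rpow_zero, mul_one]
    rw [hC]; simp only [gauss]
    calc (2 * Real.pi * 1 * u) ^ (-(d : ℝ) / 2) * Real.exp (-n ^ 2 / (2 * 1 * u))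
        ≤ (2 * Real.pi * 1 * u) ^ (-(d : ℝ) / 2) *
            (Real.exp E * Real.exp (-m ^ 2 / (2 * c * u))) := by
          rw [← Real.exp_add]
          exact mul_le_mul_of_nonneg_left (Real.exp_le_exp.mpr hexp) (by positivity)
      _ = c ^ ((d : ℝ) / 2) * Real.exp E *
            ((2 * Real.pi * c * u) ^ (-(d : ℝ) / 2) * Real.exp (-m ^ 2 / (2 * c * u))) := by
          rw [← hfac]; ring
  -- nonnegativity of gauss
  have hg0 : ∀ z : EuclideanSpace ℝ (Fin d), 0 ≤ gauss d 1 u z := by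
    intro z; rw [gauss]; positivity
  -- integrability
  set f : ℝ → ℝ := fun s => gauss d 1 u (y - x - u • bh ((k : ℝ) * h + s) x) with hf
  have hmeasf : Measurable f := by
    have hb1 : Measurable (fun s : ℝ => bh ((k : ℝ) * h + s) x) := by
      have : (fun s : ℝ => bh ((k : ℝ) * h + s) x)
          = Function.uncurry bh ∘ (fun s : ℝ => (((k : ℝ) * h + s), x)) := rfl
      rw [this]
      exact hbmeas.comp ((measurable_const.add measurable_id).prodMk measurable_const)
    have hcont : Continuous (fun z : EuclideanSpace ℝ (Fin d) => gauss d 1 u (y - x - u • z)) := by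
      unfold gauss
      fun_prop
    exact hcont.measurable.comp hb1
  have hInt : IntervalIntegrable f volume 0 h := by
    rw [intervalIntegrable_iff_integrableOn_Ioc_of_le hh.le]
    apply Integrable.mono' (integrable_const C) hmeasf.aestronglyMeasurable
    filter_upwards with s
    rw [Real.norm_eq_abs, abs_of_nonneg (hg0 _)]
    exact claim s
  have hmono : (∫ s in (0:ℝ)..h, f s) ≤ ∫ _s in (0:ℝ)..h, C :=
    intervalIntegral.integral_mono_on hh.le hInt intervalIntegrable_const
      (fun s _ => claim s)
  have hconst : (∫ _s in (0:ℝ)..h, C) = h * C := by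
    rw [intervalIntegral.integral_const]; simp [smul_eq_mul]
  calc (1 / h) * ∫ s in (0:ℝ)..h, f s
      ≤ (1 / h) * (h * C) := by
        apply mul_le_mul_of_nonneg_left _ (by positivity)
        rw [← hconst]; exact hmono
    _ = C := by field_simp
end
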